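/- arXiv:2505.12823 — 7 statements merged into one kernel-verified Lean document; each statement's English description precedes it below -/
import Mathlib

section
/- Any splicing of two 3-connected cubic graphs is again cubic and 3-connected. -/
open SimpleGraph Set

/-- A graph is cubic (3-regular) if every vertex has exactly 3 neighbours. -/
def IsCubic {V : Type*} (G : SimpleGraph V) : Prop := ∀ v : V, (G.neighborSet v).ncard = 3

/-- `G` is `k`-connected: more than `k` vertices, and deleting fewer than `k`
vertices leaves a connected graph. -/
def KConnected {V : Type*} (k : ℕ) (G : SimpleGraph V) : Prop :=
  k < Nat.card V ∧ ∀ S : Finset V, S.card < k → (G.induce ((↑S : Set V)ᶜ)).Connected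

/-- `G` has a perfect matching. -/
def Matchable {V : Type*} (G : SimpleGraph V) : Prop :=
  ∃ M : G.Subgraph, M.IsPerfectMatching

/-- `G` is matching covered: connected, of order at least two, and every edge
lies in some perfect matching. -/
def MatchingCovered {V : Type*} (G : SimpleGraph V) : Prop :=
  G.Connected ∧ 2 ≤ Nat.card V ∧
    ∀ e ∈ G.edgeSet, ∃ M : G.Subgraph, M.IsPerfectMatching ∧ e ∈ M.edgeSet

/-- The cut `∂(X)`: edges of `G` with one end in `X` and the other outside `X`. -/
def cutEdges {V : Type*} (G : SimpleGraph V) (X : Set V) : Set (Sym2 V) :=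
  {e | e ∈ G.edgeSet ∧ ∃ u v : V, e = s(u, v) ∧ u ∈ X ∧ v ∉ X}

/-- `A`, `B` form a bipartition of `G`. -/
def IsBipartitionOf {V : Type*} (G : SimpleGraph V) (A B : Set V) : Prop :=
  A ∪ B = Set.univ ∧ Disjoint A B ∧
    ∀ u v : V, G.Adj u v → ((u ∈ A ∧ v ∈ B) ∨ (u ∈ B ∧ v ∈ A))

/-- Number of odd components of `G − B`. -/
noncomputable def coddRemove {V : Type*} (G : SimpleGraph V) (B : Set V) : ℕ :=
  Nat.card {c : (G.induce Bᶜ).ConnectedComponent // Odd c.supp.ncard}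

/-- `B` is a barrier of `G`. -/
def IsBarrier {V : Type*} (G : SimpleGraph V) (B : Set V) : Prop :=
  coddRemove G B = B.ncard

/-- `v` is λ-matchable in `G`: there is a spanning subgraph in which `v` has
degree three and every other vertex has degree one. -/
def IsLambdaMatchable {V : Type*} (G : SimpleGraph V) (v : V) : Prop :=
  ∃ M : G.Subgraph, M.IsSpanning ∧ (M.neighborSet v).ncard = 3 ∧
    ∀ u : V, u ≠ v → (M.neighborSet u).ncard = 1

/-- The pair `(a, b)` is λ-matchable in `G`. -/
def IsLambdaMatchablePair {V : Type*} (G : SimpleGraph V) (a b : V) : Prop :=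
  ∃ M : G.Subgraph, M.IsSpanning ∧ (M.neighborSet a).ncard = 3 ∧ (M.neighborSet b).ncard = 3 ∧
    ∀ u : V, u ≠ a → u ≠ b → (M.neighborSet u).ncard = 1

/-- `G` is a tight cut. -/
def IsTightCut {V : Type*} (G : SimpleGraph V) (X : Set V) : Prop :=
  ∀ M : G.Subgraph, M.IsPerfectMatching → (M.edgeSet ∩ cutEdges G X).ncard = 1

/-- The contraction of `G` obtained by shrinking the complement of `X` to a
single (contraction) vertex, represented by `none`. -/
def contractOut {V : Type*} (G : SimpleGraph V) (X : Set V) : SimpleGraph (Option ↥X) :=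
  SimpleGraph.fromRel fun p q =>
    match p, q with
    | some a, some b => G.Adj a.1 b.1
    | some a, none => ∃ w : V, w ∉ X ∧ G.Adj a.1 w
    | none, _ => False

/-- Neighborhood of a set. -/
def setNbhd {V : Type*} (G : SimpleGraph V) (A' : Set V) : Set V :=
  {v | ∃ a ∈ A', G.Adj a v}

/-- The marked `C`-component on shore `X`, with the marker edge joining `u₁`, `u₂`. -/
def markedComp {V : Type*} (H : SimpleGraph V) (X : Set V) (u₁ u₂ : V) : SimpleGraph ↥X :=
  SimpleGraph.fromRel fun a b => H.Adj a.1 b.1 ∨ (a.1 = u₁ ∧ b.1 = u₂)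

/-- The splicing of `G` at `u` with `H` at `v` with respect to the bijection
`π` between the edges (equivalently, neighbours) at `u` and at `v`. -/
def splice {V W : Type*} (G : SimpleGraph V) (H : SimpleGraph W) (u : V) (v : W)
    (π : ↥(G.neighborSet u) ≃ ↥(H.neighborSet v)) :
    SimpleGraph ({x : V // x ≠ u} ⊕ {y : W // y ≠ v}) :=
  SimpleGraph.fromRel fun p q =>
    match p, q with
    | Sum.inl a, Sum.inl b => G.Adj a.1 b.1
    | Sum.inl a, Sum.inr b => ∃ h : G.Adj u a.1, ((π ⟨a.1, h⟩ : ↥(H.neighborSet v)) : W) = b.1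
    | Sum.inr a, Sum.inr b => H.Adj a.1 b.1
    | Sum.inr _, Sum.inl _ => False

section spliceAux

variable {V W : Type*} {G : SimpleGraph V} {H : SimpleGraph W} {u : V} {v : W}
  {π : ↥(G.neighborSet u) ≃ ↥(H.neighborSet v)}

lemma splice_adj_ll (a b : {x : V // x ≠ u}) :
    (splice G H u v π).Adj (Sum.inl a) (Sum.inl b) ↔ G.Adj a.1 b.1 := by
  rw [splice, SimpleGraph.fromRel_adj]
  constructor
  · rintro ⟨-, h | h⟩
    · exact h
    · exact h.symm
  · intro h
    exact ⟨fun e => h.ne (congrArg Subtype.val (Sum.inl.inj e)), Or.inl h⟩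

lemma splice_adj_lr (a : {x : V // x ≠ u}) (b : {y : W // y ≠ v}) :
    (splice G H u v π).Adj (Sum.inl a) (Sum.inr b) ↔
      ∃ h : G.Adj u a.1, ((π ⟨a.1, h⟩ : ↥(H.neighborSet v)) : W) = b.1 := by
  rw [splice, SimpleGraph.fromRel_adj]
  simp

lemma splice_adj_rl (a : {x : V // x ≠ u}) (b : {y : W // y ≠ v}) :
    (splice G H u v π).Adj (Sum.inr b) (Sum.inl a) ↔
      ∃ h : G.Adj u a.1, ((π ⟨a.1, h⟩ : ↥(H.neighborSet v)) : W) = b.1 := by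
  rw [splice, SimpleGraph.fromRel_adj]
  simp

lemma splice_adj_rr (a b : {y : W // y ≠ v}) :
    (splice G H u v π).Adj (Sum.inr a) (Sum.inr b) ↔ H.Adj a.1 b.1 := by
  rw [splice, SimpleGraph.fromRel_adj]
  constructor
  · rintro ⟨-, h | h⟩
    · exact h
    · exact h.symm
  · intro h
    exact ⟨fun e => h.ne (congrArg Subtype.val (Sum.inr.inj e)), Or.inl h⟩

lemma splice_ncard_left [DecidableEq V] (a : {x : V // x ≠ u}) :
    ((splice G H u v π).neighborSet (Sum.inl a)).ncard = (G.neighborSet a.1).ncard := by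
  classical
  set f : V → ({x : V // x ≠ u} ⊕ {y : W // y ≠ v}) := fun w =>
    if hw : w = u then
      (if h : G.Adj u a.1 then Sum.inr ⟨((π ⟨a.1, h⟩ : ↥(H.neighborSet v)) : W),
        (π ⟨a.1, h⟩).2.ne'⟩ else Sum.inl a)
    else Sum.inl ⟨w, hw⟩ with hf
  have hinj : Set.InjOn f (G.neighborSet a.1) := by
    intro w1 hw1 w2 hw2 heq
    by_cases h1 : w1 = u <;> by_cases h2 : w2 = u
    · rw [h1, h2]
    · have hadj : G.Adj u a.1 := ((h1 ▸ hw1 : u ∈ G.neighborSet a.1) : G.Adj a.1 u).symm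
      rw [hf] at heq
      simp only [dif_pos h1, dif_pos hadj, dif_neg h2] at heq
      exact absurd heq (by simp)
    · have hadj : G.Adj u a.1 := ((h2 ▸ hw2 : u ∈ G.neighborSet a.1) : G.Adj a.1 u).symm
      rw [hf] at heq
      simp only [dif_pos h2, dif_pos hadj, dif_neg h1] at heq
      exact absurd heq (by simp)
    · rw [hf] at heq
      simp only [dif_neg h1, dif_neg h2] at heq
      exact congrArg Subtype.val (Sum.inl.inj heq)
  have himg : f '' (G.neighborSet a.1) = (splice G H u v π).neighborSet (Sum.inl a) := by
    ext q
    constructor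
    · rintro ⟨w, hw, rfl⟩
      by_cases h1 : w = u
      · have hadj : G.Adj u a.1 := ((h1 ▸ hw : u ∈ G.neighborSet a.1) : G.Adj a.1 u).symm
        rw [hf]
        simp only [dif_pos h1, dif_pos hadj]
        refine (splice_adj_lr _ _).2 ⟨hadj, rfl⟩
      · rw [hf]
        simp only [dif_neg h1]
        exact (splice_adj_ll (π := π) a ⟨w, h1⟩).2 hw
    · intro hq
      cases q with
      | inl b =>
        have hb : G.Adj a.1 b.1 := (splice_adj_ll (π := π) a b).1 hq
        refine ⟨b.1, hb, ?_⟩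
        rw [hf]
        simp only [dif_neg b.2]
      | inr b =>
        obtain ⟨h, heq⟩ := (splice_adj_lr (π := π) a b).1 hq
        refine ⟨u, h.symm, ?_⟩
        rw [hf]
        simp only [dif_pos rfl, dif_pos h]
        exact congrArg Sum.inr (Subtype.ext heq)
  rw [← himg, Set.ncard_image_of_injOn hinj]

lemma splice_ncard_right [DecidableEq W] (b : {y : W // y ≠ v}) :
    ((splice G H u v π).neighborSet (Sum.inr b)).ncard = (H.neighborSet b.1).ncard := by
  classical
  set f : W → ({x : V // x ≠ u} ⊕ {y : W // y ≠ v}) := fun w =>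
    if hw : w = v then
      (if h : b.1 ∈ H.neighborSet v then Sum.inl ⟨((π.symm ⟨b.1, h⟩ : ↥(G.neighborSet u)) : V),
        (π.symm ⟨b.1, h⟩).2.ne'⟩ else Sum.inr b)
    else Sum.inr ⟨w, hw⟩ with hf
  have hinj : Set.InjOn f (H.neighborSet b.1) := by
    intro w1 hw1 w2 hw2 heq
    by_cases h1 : w1 = v <;> by_cases h2 : w2 = v
    · rw [h1, h2]
    · have hadj : b.1 ∈ H.neighborSet v := ((h1 ▸ hw1 : v ∈ H.neighborSet b.1) : H.Adj b.1 v).symm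
      rw [hf] at heq
      simp only [dif_pos h1, dif_pos hadj, dif_neg h2] at heq
      exact absurd heq (by simp)
    · have hadj : b.1 ∈ H.neighborSet v := ((h2 ▸ hw2 : v ∈ H.neighborSet b.1) : H.Adj b.1 v).symm
      rw [hf] at heq
      simp only [dif_pos h2, dif_pos hadj, dif_neg h1] at heq
      exact absurd heq (by simp)
    · rw [hf] at heq
      simp only [dif_neg h1, dif_neg h2] at heq
      exact congrArg Subtype.val (Sum.inr.inj heq)
  have himg : f '' (H.neighborSet b.1) = (splice G H u v π).neighborSet (Sum.inr b) := by
    ext q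
    constructor
    · rintro ⟨w, hw, rfl⟩
      by_cases h1 : w = v
      · have hadj : b.1 ∈ H.neighborSet v := ((h1 ▸ hw : v ∈ H.neighborSet b.1) : H.Adj b.1 v).symm
        rw [hf]
        simp only [dif_pos h1, dif_pos hadj]
        refine (splice_adj_rl _ b).2 ⟨(π.symm ⟨b.1, hadj⟩).2, ?_⟩
        have : (⟨((π.symm ⟨b.1, hadj⟩ : ↥(G.neighborSet u)) : V), (π.symm ⟨b.1, hadj⟩).2⟩ :
            ↥(G.neighborSet u)) = π.symm ⟨b.1, hadj⟩ := Subtype.ext rfl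
        rw [this, Equiv.apply_symm_apply]
      · rw [hf]
        simp only [dif_neg h1]
        exact (splice_adj_rr (π := π) b ⟨w, h1⟩).2 hw
    · intro hq
      cases q with
      | inr c =>
        have hb : H.Adj b.1 c.1 := (splice_adj_rr (π := π) b c).1 hq
        refine ⟨c.1, hb, ?_⟩
        rw [hf]
        simp only [dif_neg c.2]
      | inl a =>
        obtain ⟨h, heq⟩ := (splice_adj_rl (π := π) a b).1 hq
        have hadj : b.1 ∈ H.neighborSet v := heq ▸ (π ⟨a.1, h⟩).2
        refine ⟨v, ?_, ?_⟩
        · exact (hadj : H.Adj v b.1).symm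
        rw [hf]
        simp only [dif_pos rfl, dif_pos hadj]
        refine congrArg Sum.inl (Subtype.ext ?_)
        have : π.symm ⟨b.1, hadj⟩ = ⟨a.1, h⟩ := by
          rw [Equiv.symm_apply_eq]
          exact Subtype.ext heq.symm
        rw [this]
  rw [← himg, Set.ncard_image_of_injOn hinj]

end spliceAux

lemma reach_transfer {α β : Type*} {Γ : SimpleGraph α} {Δ : SimpleGraph β} (f : α → β)
    (hf : ∀ ⦃x y⦄, Γ.Adj x y → Δ.Adj (f x) (f y)) {a b : α} (h : Γ.Reachable a b) :
    Δ.Reachable (f a) (f b) :=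
  h.map ⟨f, fun h' => hf h'⟩

lemma escape {α : Type*} {Γ : SimpleGraph α} {a z : α} (w : Γ.Walk a z) :
    ∀ hne : a ≠ z, ∃ c, ∃ hc : Γ.Adj c z,
      (Γ.induce {x | x ≠ z}).Reachable ⟨a, hne⟩ ⟨c, hc.ne⟩ := by
  induction w with
  | nil => exact fun hne => absurd rfl hne
  | @cons a b z h w ih =>
    intro hne
    by_cases hb : b = z
    · subst hb
      exact ⟨a, h, Reachable.refl _⟩
    · obtain ⟨c, hc, hr⟩ := ih hb
      refine ⟨c, hc, Reachable.trans (Adj.reachable ?_) hr⟩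
      exact h

section parts
variable {V W : Type*} [DecidableEq V] [DecidableEq W]

def leftPart (u : V) (v : W) (S : Finset ({x : V // x ≠ u} ⊕ {y : W // y ≠ v})) : Finset V :=
  (S.filter (fun p => p.isLeft)).image (Sum.elim Subtype.val (fun _ => u))

def rightPart (u : V) (v : W) (S : Finset ({x : V // x ≠ u} ⊕ {y : W // y ≠ v})) : Finset W :=
  (S.filter (fun p => ¬ p.isLeft)).image (Sum.elim (fun _ => v) Subtype.val)

lemma mem_leftPart {u : V} {v : W} {S : Finset ({x : V // x ≠ u} ⊕ {y : W // y ≠ v})}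
    (a : {x : V // x ≠ u}) : a.1 ∈ leftPart u v S ↔ Sum.inl a ∈ S := by
  simp only [leftPart, Finset.mem_image, Finset.mem_filter]
  constructor
  · rintro ⟨p, ⟨hpS, hpl⟩, hval⟩
    cases p with
    | inl c =>
      obtain rfl : c = a := Subtype.ext hval
      exact hpS
    | inr c => simp at hpl
  · intro h
    exact ⟨Sum.inl a, ⟨h, rfl⟩, rfl⟩

lemma mem_rightPart {u : V} {v : W} {S : Finset ({x : V // x ≠ u} ⊕ {y : W // y ≠ v})}
    (b : {y : W // y ≠ v}) : b.1 ∈ rightPart u v S ↔ Sum.inr b ∈ S := by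
  simp only [rightPart, Finset.mem_image, Finset.mem_filter]
  constructor
  · rintro ⟨p, ⟨hpS, hpl⟩, hval⟩
    cases p with
    | inr c =>
      obtain rfl : c = b := Subtype.ext hval
      exact hpS
    | inl c => simp at hpl
  · intro h
    exact ⟨Sum.inr b, ⟨h, by simp⟩, rfl⟩

lemma u_notMem_leftPart {u : V} {v : W} {S : Finset ({x : V // x ≠ u} ⊕ {y : W // y ≠ v})} :
    u ∉ leftPart u v S := by
  simp only [leftPart, Finset.mem_image, Finset.mem_filter]
  rintro ⟨p, ⟨-, hpl⟩, hval⟩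
  cases p with
  | inl c => exact c.2 hval
  | inr c => simp at hpl

lemma v_notMem_rightPart {u : V} {v : W} {S : Finset ({x : V // x ≠ u} ⊕ {y : W // y ≠ v})} :
    v ∉ rightPart u v S := by
  simp only [rightPart, Finset.mem_image, Finset.mem_filter]
  rintro ⟨p, ⟨-, hpl⟩, hval⟩
  cases p with
  | inr c => exact c.2 hval
  | inl c => simp at hpl

lemma card_parts {u : V} {v : W} (S : Finset ({x : V // x ≠ u} ⊕ {y : W // y ≠ v})) :
    (leftPart u v S).card + (rightPart u v S).card ≤ S.card := by
  calc (leftPart u v S).card + (rightPart u v S).card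
      ≤ (S.filter (fun p => p.isLeft = true)).card
        + (S.filter (fun p => ¬ p.isLeft = true)).card :=
        add_le_add Finset.card_image_le Finset.card_image_le
    _ = S.card := Finset.card_filter_add_card_filter_not _

end parts

lemma survivor {V W : Type*} [Fintype V] [Fintype W] [DecidableEq V] [DecidableEq W]
    {G : SimpleGraph V} {H : SimpleGraph W} {u : V} {v : W}
    (π : ↥(G.neighborSet u) ≃ ↥(H.neighborSet v))
    (h3 : (G.neighborSet u).ncard = 3)
    (SG : Finset V) (SH : Finset W) (hcard : SG.card + SH.card ≤ 2) :
    ∃ a : ↥(G.neighborSet u), a.1 ∉ SG ∧ ((π a : ↥(H.neighborSet v)) : W) ∉ SH := by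
  classical
  by_contra hcon
  push_neg at hcon
  set f : ↥(G.neighborSet u) → V ⊕ W := fun a =>
    if a.1 ∈ SG then Sum.inl a.1 else Sum.inr ((π a : ↥(H.neighborSet v)) : W) with hf
  set t : Set (V ⊕ W) := (Sum.inl '' (↑SG : Set V)) ∪ (Sum.inr '' (↑SH : Set W)) with ht
  have hmaps : ∀ a ∈ (univ : Set ↥(G.neighborSet u)), f a ∈ t := by
    intro a _
    by_cases hA : a.1 ∈ SG
    · rw [hf]; exact Or.inl ⟨a.1, hA, by simp [hA]⟩
    · rw [hf]
      exact Or.inr ⟨_, hcon a hA, by simp [hA]⟩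
  have hinj : Set.InjOn f (univ : Set ↥(G.neighborSet u)) := by
    intro a _ b _ heq
    rw [hf] at heq
    by_cases hA : a.1 ∈ SG <;> by_cases hB : b.1 ∈ SG <;>
      simp only [if_pos, if_neg, hA, hB, if_true, if_false] at heq
    · exact Subtype.ext (Sum.inl.inj heq)
    · exact absurd heq (by simp)
    · exact absurd heq (by simp)
    · exact Equiv.injective π (Subtype.ext (Sum.inr.inj heq))
  have hle := Set.ncard_le_ncard_of_injOn f hmaps hinj (Set.toFinite t)
  have huniv : (univ : Set ↥(G.neighborSet u)).ncard = 3 := by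
    rw [Set.ncard_univ, Nat.card_coe_set_eq, h3]
  have htle : t.ncard ≤ 2 := by
    calc t.ncard ≤ (Sum.inl '' (↑SG : Set V)).ncard + (Sum.inr '' (↑SH : Set W)).ncard :=
          Set.ncard_union_le _ _
      _ = SG.card + SH.card := by
          rw [Set.ncard_image_of_injective _ Sum.inl_injective,
            Set.ncard_image_of_injective _ Sum.inr_injective,
            Set.ncard_coe_finset, Set.ncard_coe_finset]
      _ ≤ 2 := hcard
  omega
section lifts

variable {V W : Type*} [DecidableEq V] [DecidableEq W]
  {G : SimpleGraph V} {H : SimpleGraph W} {u : V} {v : W}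
  {π : ↥(G.neighborSet u) ≃ ↥(H.neighborSet v)}

/-- Lift a vertex of `G` minus a superset `D` of `u` and the left part of `S`
into the spliced graph minus `S`. -/
def liftL (S : Finset ({x : V // x ≠ u} ⊕ {y : W // y ≠ v})) (D : Finset V)
    (hu : u ∈ D) (hD : leftPart u v S ⊆ D) (x : ↥((↑D : Set V)ᶜ)) :
    ↥((↑S : Set ({x : V // x ≠ u} ⊕ {y : W // y ≠ v}))ᶜ) :=
  ⟨Sum.inl ⟨x.1, by intro h; exact x.2 (Finset.mem_coe.2 (h ▸ hu))⟩, by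
    intro hS
    exact x.2 (Finset.mem_coe.2 (hD ((mem_leftPart _).2 hS)))⟩

def liftR (S : Finset ({x : V // x ≠ u} ⊕ {y : W // y ≠ v})) (D : Finset W)
    (hv : v ∈ D) (hD : rightPart u v S ⊆ D) (x : ↥((↑D : Set W)ᶜ)) :
    ↥((↑S : Set ({x : V // x ≠ u} ⊕ {y : W // y ≠ v}))ᶜ) :=
  ⟨Sum.inr ⟨x.1, by intro h; exact x.2 (Finset.mem_coe.2 (h ▸ hv))⟩, by
    intro hS
    exact x.2 (Finset.mem_coe.2 (hD ((mem_rightPart _).2 hS)))⟩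

lemma liftL_reach (S : Finset ({x : V // x ≠ u} ⊕ {y : W // y ≠ v})) (D : Finset V)
    (hu : u ∈ D) (hD : leftPart u v S ⊆ D) {x y : ↥((↑D : Set V)ᶜ)}
    (h : (G.induce ((↑D : Set V)ᶜ)).Reachable x y) :
    ((splice G H u v π).induce ((↑S : Set _)ᶜ)).Reachable
      (liftL S D hu hD x) (liftL S D hu hD y) := by
  refine reach_transfer (liftL S D hu hD) ?_ h
  intro x y hxy
  exact (splice_adj_ll (π := π) _ _).2 hxy

lemma liftR_reach (S : Finset ({x : V // x ≠ u} ⊕ {y : W // y ≠ v})) (D : Finset W)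
    (hv : v ∈ D) (hD : rightPart u v S ⊆ D) {x y : ↥((↑D : Set W)ᶜ)}
    (h : (H.induce ((↑D : Set W)ᶜ)).Reachable x y) :
    ((splice G H u v π).induce ((↑S : Set _)ᶜ)).Reachable
      (liftR S D hv hD x) (liftR S D hv hD y) := by
  refine reach_transfer (liftR S D hv hD) ?_ h
  intro x y hxy
  exact (splice_adj_rr (π := π) _ _).2 hxy

def liftL2 (S : Finset ({x : V // x ≠ u} ⊕ {y : W // y ≠ v})) (D : Finset V)
    (hD : leftPart u v S ⊆ D) (z : ↥((↑D : Set V)ᶜ)) (hz : z.1 = u)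
    (y : ↥{x : ↥((↑D : Set V)ᶜ) | x ≠ z}) :
    ↥((↑S : Set ({x : V // x ≠ u} ⊕ {y : W // y ≠ v}))ᶜ) :=
  ⟨Sum.inl ⟨y.1.1, by intro h; exact y.2 (Subtype.ext (h.trans hz.symm))⟩, by
    intro hS
    exact y.1.2 (Finset.mem_coe.2 (hD ((mem_leftPart _).2 hS)))⟩

def liftR2 (S : Finset ({x : V // x ≠ u} ⊕ {y : W // y ≠ v})) (D : Finset W)
    (hD : rightPart u v S ⊆ D) (z : ↥((↑D : Set W)ᶜ)) (hz : z.1 = v)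
    (y : ↥{x : ↥((↑D : Set W)ᶜ) | x ≠ z}) :
    ↥((↑S : Set ({x : V // x ≠ u} ⊕ {y : W // y ≠ v}))ᶜ) :=
  ⟨Sum.inr ⟨y.1.1, by intro h; exact y.2 (Subtype.ext (h.trans hz.symm))⟩, by
    intro hS
    exact y.1.2 (Finset.mem_coe.2 (hD ((mem_rightPart _).2 hS)))⟩

lemma liftL2_reach (S : Finset ({x : V // x ≠ u} ⊕ {y : W // y ≠ v})) (D : Finset V)
    (hD : leftPart u v S ⊆ D) (z : ↥((↑D : Set V)ᶜ)) (hz : z.1 = u)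
    {x y : ↥{x : ↥((↑D : Set V)ᶜ) | x ≠ z}}
    (h : ((G.induce ((↑D : Set V)ᶜ)).induce {x | x ≠ z}).Reachable x y) :
    ((splice G H u v π).induce ((↑S : Set _)ᶜ)).Reachable
      (liftL2 S D hD z hz x) (liftL2 S D hD z hz y) := by
  refine reach_transfer (liftL2 S D hD z hz) ?_ h
  intro x y hxy
  exact (splice_adj_ll (π := π) _ _).2 hxy

lemma liftR2_reach (S : Finset ({x : V // x ≠ u} ⊕ {y : W // y ≠ v})) (D : Finset W)
    (hD : rightPart u v S ⊆ D) (z : ↥((↑D : Set W)ᶜ)) (hz : z.1 = v)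
    {x y : ↥{x : ↥((↑D : Set W)ᶜ) | x ≠ z}}
    (h : ((H.induce ((↑D : Set W)ᶜ)).induce {x | x ≠ z}).Reachable x y) :
    ((splice G H u v π).induce ((↑S : Set _)ᶜ)).Reachable
      (liftR2 S D hD z hz x) (liftR2 S D hD z hz y) := by
  refine reach_transfer (liftR2 S D hD z hz) ?_ h
  intro x y hxy
  exact (splice_adj_rr (π := π) _ _).2 hxy

end lifts
/-- any splicing of two 3-connected cubic graphs is cubic and
3-connected. -/
theorem splice_cubic_threeConnected {V W : Type*} [Fintype V] [Fintype W]
    [DecidableEq V] [DecidableEq W]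
    (G : SimpleGraph V) (H : SimpleGraph W) (u : V) (v : W)
    (π : ↥(G.neighborSet u) ≃ ↥(H.neighborSet v))
    (hGcub : IsCubic G) (hHcub : IsCubic H)
    (hG3 : KConnected 3 G) (hH3 : KConnected 3 H) :
    IsCubic (splice G H u v π) ∧ KConnected 3 (splice G H u v π) := by
  classical
  obtain ⟨hVcard, hGconn⟩ := hG3
  obtain ⟨hWcard, hHconn⟩ := hH3
  constructor
  · intro p
    cases p with
    | inl a => rw [splice_ncard_left]; exact hGcub a.1
    | inr b => rw [splice_ncard_right]; exact hHcub b.1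
  constructor
  · -- more than 3 vertices
    rw [Nat.card_eq_fintype_card] at hVcard hWcard ⊢
    rw [Fintype.card_sum]
    have h1 : Fintype.card {x : V // x ≠ u} = Fintype.card V - 1 := by
      rw [Fintype.card_subtype_compl, Fintype.card_subtype_eq]
    have h2 : Fintype.card {y : W // y ≠ v} = Fintype.card W - 1 := by
      rw [Fintype.card_subtype_compl, Fintype.card_subtype_eq]
    omega
  · intro S hScard
    set SG := leftPart u v S with hSGdef
    set SH := rightPart u v S with hSHdef
    have hSGSH : SG.card + SH.card ≤ 2 := le_trans (card_parts S) (by omega)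
    obtain ⟨a₀, ha₀G, ha₀H⟩ := survivor π (hGcub u) SG SH hSGSH
    have ha₀adj : G.Adj u a₀.1 := a₀.2
    have hb₀adj : H.Adj v ((π a₀ : ↥(H.neighborSet v)) : W) := (π a₀).2
    set T := (splice G H u v π).induce ((↑S : Set ({x : V // x ≠ u} ⊕ {y : W // y ≠ v}))ᶜ) with hTdef
    set a₀' : {x : V // x ≠ u} := ⟨a₀.1, ha₀adj.ne'⟩ with ha₀'def
    set b₀' : {y : W // y ≠ v} := ⟨((π a₀ : ↥(H.neighborSet v)) : W), hb₀adj.ne'⟩ with hb₀'def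
    have hpLmem : (Sum.inl a₀' : _) ∈ ((↑S : Set ({x : V // x ≠ u} ⊕ {y : W // y ≠ v}))ᶜ) := by
      simp only [Set.mem_compl_iff, Finset.mem_coe]
      exact fun h => ha₀G ((mem_leftPart a₀').2 h)
    have hpRmem : (Sum.inr b₀' : _) ∈ ((↑S : Set ({x : V // x ≠ u} ⊕ {y : W // y ≠ v}))ᶜ) := by
      simp only [Set.mem_compl_iff, Finset.mem_coe]
      exact fun h => ha₀H ((mem_rightPart b₀').2 h)
    set pivotL : ↥((↑S : Set ({x : V // x ≠ u} ⊕ {y : W // y ≠ v}))ᶜ) := ⟨Sum.inl a₀', hpLmem⟩ with hpivotL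
    set pivotR : ↥((↑S : Set ({x : V // x ≠ u} ⊕ {y : W // y ≠ v}))ᶜ) := ⟨Sum.inr b₀', hpRmem⟩ with hpivotR
    have hpivadj : T.Adj pivotL pivotR := by
      show (splice G H u v π).Adj (Sum.inl a₀') (Sum.inr b₀')
      exact (splice_adj_lr _ _).2 ⟨ha₀adj, rfl⟩
    -- reaching the pivot from the G side when at most one left vertex was removed
    have hsideG : SG.card ≤ 1 → ∀ (p : ↥((↑S : Set ({x : V // x ≠ u} ⊕ {y : W // y ≠ v}))ᶜ)) (a : {x : V // x ≠ u}),
        p.1 = Sum.inl a → T.Reachable p pivotL := by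
      intro hSG1 p a hpa
      have haS : Sum.inl a ∉ S := by
        have hp2 := p.2
        rw [hpa] at hp2
        exact hp2
      have haSG : a.1 ∉ SG := fun h => haS ((mem_leftPart a).1 h)
      have hconn := hGconn (insert u SG)
        (lt_of_le_of_lt (Finset.card_insert_le _ _) (by omega))
      have haD : a.1 ∈ ((↑(insert u SG) : Set V))ᶜ := by
        simp only [Finset.coe_insert, Set.mem_compl_iff, Set.mem_insert_iff, not_or]
        exact ⟨a.2, haSG⟩
      have ha₀D : a₀.1 ∈ ((↑(insert u SG) : Set V))ᶜ := by
        simp only [Finset.coe_insert, Set.mem_compl_iff, Set.mem_insert_iff, not_or]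
        exact ⟨ha₀adj.ne', ha₀G⟩
      have hreach := hconn.preconnected ⟨a.1, haD⟩ ⟨a₀.1, ha₀D⟩
      have key := liftL_reach (π := π) (H := H) S (insert u SG)
        (Finset.mem_insert_self u SG) (Finset.subset_insert u SG) hreach
      have e1 : liftL S (insert u SG) (Finset.mem_insert_self u SG)
          (Finset.subset_insert u SG) ⟨a.1, haD⟩ = p := by
        refine Subtype.ext ?_
        rw [hpa]
        exact congrArg Sum.inl (Subtype.ext rfl)
      have e2 : liftL S (insert u SG) (Finset.mem_insert_self u SG)
          (Finset.subset_insert u SG) ⟨a₀.1, ha₀D⟩ = pivotL :=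
        Subtype.ext (congrArg Sum.inl (Subtype.ext rfl))
      rw [e1, e2] at key
      exact key
    have hsideH : SH.card ≤ 1 → ∀ (p : ↥((↑S : Set ({x : V // x ≠ u} ⊕ {y : W // y ≠ v}))ᶜ)) (b : {y : W // y ≠ v}),
        p.1 = Sum.inr b → T.Reachable p pivotR := by
      intro hSH1 p b hpb
      have hbS : Sum.inr b ∉ S := by
        have hp2 := p.2
        rw [hpb] at hp2
        exact hp2
      have hbSH : b.1 ∉ SH := fun h => hbS ((mem_rightPart b).1 h)
      have hconn := hHconn (insert v SH)
        (lt_of_le_of_lt (Finset.card_insert_le _ _) (by omega))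
      have hbD : b.1 ∈ ((↑(insert v SH) : Set W))ᶜ := by
        simp only [Finset.coe_insert, Set.mem_compl_iff, Set.mem_insert_iff, not_or]
        exact ⟨b.2, hbSH⟩
      have hb₀D : ((π a₀ : ↥(H.neighborSet v)) : W) ∈ ((↑(insert v SH) : Set W))ᶜ := by
        simp only [Finset.coe_insert, Set.mem_compl_iff, Set.mem_insert_iff, not_or]
        exact ⟨hb₀adj.ne', ha₀H⟩
      have hreach := hconn.preconnected ⟨b.1, hbD⟩ ⟨_, hb₀D⟩
      have key := liftR_reach (π := π) (G := G) S (insert v SH)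
        (Finset.mem_insert_self v SH) (Finset.subset_insert v SH) hreach
      have e1 : liftR S (insert v SH) (Finset.mem_insert_self v SH)
          (Finset.subset_insert v SH) ⟨b.1, hbD⟩ = p := by
        refine Subtype.ext ?_
        rw [hpb]
        exact congrArg Sum.inr (Subtype.ext rfl)
      have e2 : liftR S (insert v SH) (Finset.mem_insert_self v SH)
          (Finset.subset_insert v SH) ⟨_, hb₀D⟩ = pivotR :=
        Subtype.ext (congrArg Sum.inr (Subtype.ext rfl))
      rw [e1, e2] at key
      exact key
    -- full G side
    have hfullG : ∀ (p : ↥((↑S : Set ({x : V // x ≠ u} ⊕ {y : W // y ≠ v}))ᶜ)) (a : {x : V // x ≠ u}),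
        p.1 = Sum.inl a → T.Reachable p pivotL := by
      intro p a hpa
      by_cases hSG1 : SG.card ≤ 1
      · exact hsideG hSG1 p a hpa
      · have hSG2 : SG.card = 2 := by omega
        have hSH0 : SH = ∅ := Finset.card_eq_zero.1 (by omega)
        have haS : Sum.inl a ∉ S := by
          have hp2 := p.2
          rw [hpa] at hp2
          exact hp2
        have haSG : a.1 ∉ SG := fun h => haS ((mem_leftPart a).1 h)
        have hconn := hGconn SG (by omega)
        have hzmem : u ∈ ((↑SG : Set V))ᶜ := by
          simp only [Set.mem_compl_iff, Finset.mem_coe]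
          exact u_notMem_leftPart
        have hxmem : a.1 ∈ ((↑SG : Set V))ᶜ := by
          simp only [Set.mem_compl_iff, Finset.mem_coe]
          exact haSG
        have hne : (⟨a.1, hxmem⟩ : ↥((↑SG : Set V))ᶜ) ≠ ⟨u, hzmem⟩ :=
          fun h => a.2 (congrArg Subtype.val h)
        obtain ⟨wk⟩ := hconn.preconnected ⟨a.1, hxmem⟩ ⟨u, hzmem⟩
        obtain ⟨c, hc, hr⟩ := escape wk hne
        have hcu : G.Adj u c.1 := (hc : G.Adj c.1 u).symm
        have key := liftL2_reach (π := π) (H := H) S SG (Finset.Subset.refl SG)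
          ⟨u, hzmem⟩ rfl hr
        have e1 : liftL2 S SG (Finset.Subset.refl SG) ⟨u, hzmem⟩ rfl ⟨⟨a.1, hxmem⟩, hne⟩
            = p := by
          refine Subtype.ext ?_
          rw [hpa]
          exact congrArg Sum.inl (Subtype.ext rfl)
        rw [e1] at key
        -- cross edge from c
        have hbcmem : (Sum.inr ⟨((π ⟨c.1, hcu⟩ : ↥(H.neighborSet v)) : W),
            (π ⟨c.1, hcu⟩).2.ne'⟩ : _) ∈ ((↑S : Set ({x : V // x ≠ u} ⊕ {y : W // y ≠ v}))ᶜ) := by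
          intro h
          have := (mem_rightPart _).2 h
          rw [← hSHdef, hSH0] at this
          exact absurd this (Finset.notMem_empty _)
        have hadj2 : T.Adj (liftL2 S SG (Finset.Subset.refl SG) ⟨u, hzmem⟩ rfl
            ⟨c, hc.ne⟩) ⟨_, hbcmem⟩ := by
          show (splice G H u v π).Adj (Sum.inl ⟨c.1, hcu.ne'⟩) (Sum.inr _)
          exact (splice_adj_lr _ _).2 ⟨hcu, rfl⟩
        have hHside := hsideH (by omega) ⟨_, hbcmem⟩ _ rfl
        exact key.trans (hadj2.reachable.trans (hHside.trans hpivadj.symm.reachable))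
    -- full H side
    have hfullH : ∀ (p : ↥((↑S : Set ({x : V // x ≠ u} ⊕ {y : W // y ≠ v}))ᶜ)) (b : {y : W // y ≠ v}),
        p.1 = Sum.inr b → T.Reachable p pivotR := by
      intro p b hpb
      by_cases hSH1 : SH.card ≤ 1
      · exact hsideH hSH1 p b hpb
      · have hSH2 : SH.card = 2 := by omega
        have hSG0 : SG = ∅ := Finset.card_eq_zero.1 (by omega)
        have hbS : Sum.inr b ∉ S := by
          have hp2 := p.2
          rw [hpb] at hp2
          exact hp2
        have hbSH : b.1 ∉ SH := fun h => hbS ((mem_rightPart b).1 h)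
        have hconn := hHconn SH (by omega)
        have hzmem : v ∈ ((↑SH : Set W))ᶜ := by
          simp only [Set.mem_compl_iff, Finset.mem_coe]
          exact v_notMem_rightPart
        have hxmem : b.1 ∈ ((↑SH : Set W))ᶜ := by
          simp only [Set.mem_compl_iff, Finset.mem_coe]
          exact hbSH
        have hne : (⟨b.1, hxmem⟩ : ↥((↑SH : Set W))ᶜ) ≠ ⟨v, hzmem⟩ :=
          fun h => b.2 (congrArg Subtype.val h)
        obtain ⟨wk⟩ := hconn.preconnected ⟨b.1, hxmem⟩ ⟨v, hzmem⟩
        obtain ⟨c, hc, hr⟩ := escape wk hne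
        have hcv : c.1 ∈ H.neighborSet v := ((hc : H.Adj c.1 v).symm : H.Adj v c.1)
        have key := liftR2_reach (π := π) (G := G) S SH (Finset.Subset.refl SH)
          ⟨v, hzmem⟩ rfl hr
        have e1 : liftR2 S SH (Finset.Subset.refl SH) ⟨v, hzmem⟩ rfl ⟨⟨b.1, hxmem⟩, hne⟩
            = p := by
          refine Subtype.ext ?_
          rw [hpb]
          exact congrArg Sum.inr (Subtype.ext rfl)
        rw [e1] at key
        -- cross edge into c from the G side
        have hacmem : (Sum.inl ⟨((π.symm ⟨c.1, hcv⟩ : ↥(G.neighborSet u)) : V),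
            (π.symm ⟨c.1, hcv⟩).2.ne'⟩ : _) ∈ ((↑S : Set ({x : V // x ≠ u} ⊕ {y : W // y ≠ v}))ᶜ) := by
          intro h
          have := (mem_leftPart _).2 h
          rw [← hSGdef, hSG0] at this
          exact absurd this (Finset.notMem_empty _)
        have hadj2 : T.Adj (⟨_, hacmem⟩ : ↥((↑S : Set ({x : V // x ≠ u} ⊕ {y : W // y ≠ v}))ᶜ))
            (liftR2 S SH (Finset.Subset.refl SH) ⟨v, hzmem⟩ rfl ⟨c, hc.ne⟩) := by
          show (splice G H u v π).Adj (Sum.inl _) (Sum.inr ⟨c.1, fun h => hc.ne (Subtype.ext h)⟩)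
          exact (splice_adj_lr _ _).2 ⟨(π.symm ⟨c.1, hcv⟩).2,
            congrArg Subtype.val (π.apply_symm_apply ⟨c.1, hcv⟩)⟩
        have hGside := hsideG (by omega) ⟨_, hacmem⟩ _ rfl
        exact key.trans (hadj2.symm.reachable.trans (hGside.trans hpivadj.reachable))
    rw [SimpleGraph.connected_iff]
    refine ⟨?_, ⟨pivotL⟩⟩
    intro p q
    have hto : ∀ r : ↥((↑S : Set ({x : V // x ≠ u} ⊕ {y : W // y ≠ v}))ᶜ), T.Reachable r pivotL := by
      intro r
      obtain ⟨rv, hrv⟩ := r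
      cases rv with
      | inl a => exact hfullG ⟨Sum.inl a, hrv⟩ a rfl
      | inr b => exact (hfullH ⟨Sum.inr b, hrv⟩ b rfl).trans hpivadj.symm.reachable
    exact (hto p).trans (hto q).symm
end

section
/- Let ∂(X) be a separating cut of a 2-connected cubic graph G. Then every λ-matchable vertex of the contraction G/X̄ (other than the contraction vertex) is also λ-matchable in G. -/
open SimpleGraph Set

/-- `∂(X)` is a separating cut of the matching covered graph `G`: both
cut-contractions `G/X̄` (= `contractOut G X`) and `G/X` (= `contractOut G Xᶜ`)
are matching covered. -/
def IsSeparatingCut {V : Type*} (G : SimpleGraph V) (X : Set V) : Prop :=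
  MatchingCovered G ∧ MatchingCovered (contractOut G X) ∧ MatchingCovered (contractOut G Xᶜ)

/-- if `∂(X)` is a separating cut of a 2-connected cubic graph,
then every λ-matchable vertex of `G/X̄` other than the contraction vertex is
λ-matchable in `G`. -/
theorem lambdaMatchable_of_contraction {V : Type*} [Fintype V]
    (G : SimpleGraph V) (hconn : KConnected 2 G) (hcub : IsCubic G)
    (X : Set V) (hsep : IsSeparatingCut G X) :
    ∀ a : ↥X, IsLambdaMatchable (contractOut G X) (some a) → IsLambdaMatchable G a.1 := by
  classical
  obtain ⟨-, -, hmcX⟩ := hsep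
  rintro a ⟨M, hMspan, hMa3, hMdeg1⟩
  -- the unique M-neighbor of the contraction vertex
  have hn1 : (M.neighborSet none).ncard = 1 := hMdeg1 none (by simp)
  obtain ⟨p, hp⟩ := Set.ncard_eq_one.mp hn1
  have hpadj : M.Adj none p := by
    have : p ∈ M.neighborSet none := by rw [hp]; rfl
    exact this
  obtain ⟨b', rfl⟩ : ∃ b', p = some b' := by
    cases p with
    | none => exact absurd rfl hpadj.ne
    | some q => exact ⟨q, rfl⟩
  have hbadj : ∀ v : ↥X, M.Adj (some v) none ↔ v = b' := by
    intro v
    constructor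
    · intro h
      have hv : some v ∈ M.neighborSet none := h.symm
      rw [hp, Set.mem_singleton_iff] at hv
      exact Option.some.inj hv
    · rintro rfl; exact hpadj.symm
  -- extract a witnessing cut edge b'–w
  have hco : (contractOut G X).Adj (some b') none := M.adj_sub hpadj.symm
  obtain ⟨w, hwX, hbw⟩ : ∃ w, w ∉ X ∧ G.Adj b'.1 w := by
    simp only [contractOut, SimpleGraph.fromRel_adj] at hco
    rcases hco.2 with h | h
    · exact h
    · exact h.elim
  -- adjacency extraction lemmas
  have hMG : ∀ u v : ↥X, M.Adj (some u) (some v) → G.Adj u.1 v.1 := by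
    intro u v h
    have h2 := M.adj_sub h
    simp only [contractOut, SimpleGraph.fromRel_adj] at h2
    rcases h2.2 with h3 | h3
    · exact h3
    · exact h3.symm
  -- the cut edge in G/X
  have hwXc : w ∈ Xᶜ := hwX
  have hedge : s(some (⟨w, hwXc⟩ : ↥Xᶜ), none) ∈ (contractOut G Xᶜ).edgeSet := by
    rw [SimpleGraph.mem_edgeSet]
    simp only [contractOut, SimpleGraph.fromRel_adj]
    refine ⟨by simp, Or.inl ⟨b'.1, ?_, hbw.symm⟩⟩
    simp [b'.2]
  obtain ⟨M', ⟨hM'm, hM'sp⟩, hM'e⟩ := hmcX.2.2 _ hedge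
  have hM'wn : M'.Adj (some ⟨w, hwXc⟩) none := (SimpleGraph.Subgraph.mem_edgeSet).mp hM'e
  have huniq : ∀ v : Option ↥Xᶜ, ∃! u, M'.Adj v u := fun v => hM'm (hM'sp v)
  have hwadj : ∀ v : ↥Xᶜ, M'.Adj (some v) none ↔ v = ⟨w, hwXc⟩ := by
    intro v
    constructor
    · intro h
      have := (huniq none).unique h.symm hM'wn.symm
      exact Option.some.inj this
    · rintro rfl; exact hM'wn
  have hM'G : ∀ u v : ↥Xᶜ, M'.Adj (some u) (some v) → G.Adj u.1 v.1 := by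
    intro u v h
    have h2 := M'.adj_sub h
    simp only [contractOut, SimpleGraph.fromRel_adj] at h2
    rcases h2.2 with h3 | h3
    · exact h3
    · exact h3.symm
  have hM'1 : ∀ v : Option ↥Xᶜ, (M'.neighborSet v).ncard = 1 := by
    intro v
    obtain ⟨u, hu, hun⟩ := huniq v
    have : M'.neighborSet v = {u} := by
      ext x
      exact ⟨fun h => hun x h, fun h => h ▸ hu⟩
    rw [this]
    exact Set.ncard_singleton u
  -- the lifted subgraph
  let N : G.Subgraph :=
    { verts := Set.univ
      Adj := fun u v =>
        (∃ (hu : u ∈ X) (hv : v ∈ X), M.Adj (some ⟨u, hu⟩) (some ⟨v, hv⟩)) ∨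
        (∃ (hu : u ∈ Xᶜ) (hv : v ∈ Xᶜ), M'.Adj (some ⟨u, hu⟩) (some ⟨v, hv⟩)) ∨
        (u = b'.1 ∧ v = w) ∨ (u = w ∧ v = b'.1)
      adj_sub := by
        rintro u v (⟨hu, hv, h⟩ | ⟨hu, hv, h⟩ | ⟨rfl, rfl⟩ | ⟨rfl, rfl⟩)
        · exact hMG _ _ h
        · exact hM'G _ _ h
        · exact hbw
        · exact hbw.symm
      edge_vert := fun _ => trivial
      symm := by
        constructor
        rintro u v (⟨hu, hv, h⟩ | ⟨hu, hv, h⟩ | ⟨rfl, rfl⟩ | ⟨rfl, rfl⟩)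
        · exact Or.inl ⟨hv, hu, h.symm⟩
        · exact Or.inr (Or.inl ⟨hv, hu, h.symm⟩)
        · exact Or.inr (Or.inr (Or.inr ⟨rfl, rfl⟩))
        · exact Or.inr (Or.inr (Or.inl ⟨rfl, rfl⟩)) }
  -- injective decoding maps
  have hfinj : Function.Injective (fun q : Option ↥X => q.elim w Subtype.val) := by
    rintro (_ | q1) (_ | q2) h
    · rfl
    · have h2 : w = q2.1 := h
      exact absurd q2.2 (by rw [← h2]; exact hwX)
    · have h2 : w = q1.1 := h.symm
      exact absurd q1.2 (by rw [← h2]; exact hwX)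
    · exact congrArg some (Subtype.ext h)
  have hginj : Function.Injective (fun q : Option ↥Xᶜ => q.elim b'.1 Subtype.val) := by
    rintro (_ | q1) (_ | q2) h
    · rfl
    · have h2 : b'.1 = q2.1 := h
      have h3 : q2.1 ∉ X := q2.2
      rw [← h2] at h3
      exact absurd b'.2 h3
    · have h2 : b'.1 = q1.1 := h.symm
      have h3 : q1.1 ∉ X := q1.2
      rw [← h2] at h3
      exact absurd b'.2 h3
    · exact congrArg some (Subtype.ext h)
  -- neighborhood identities
  have hNX : ∀ (v : V) (hv : v ∈ X),
      N.neighborSet v = (fun q : Option ↥X => q.elim w Subtype.val) '' M.neighborSet (some ⟨v, hv⟩) := by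
    intro v hv
    ext u
    constructor
    · rintro (⟨h1, h2, h⟩ | ⟨h1, h2, h⟩ | ⟨rfl, rfl⟩ | ⟨rfl, rfl⟩)
      · exact ⟨some ⟨u, h2⟩, h, rfl⟩
      · exact absurd hv h1
      · exact ⟨none, (hbadj _).mpr (Subtype.ext rfl), rfl⟩
      · exact absurd hv hwX
    · rintro ⟨q, hq, rfl⟩
      cases q with
      | none =>
          exact Or.inr (Or.inr (Or.inl ⟨congrArg Subtype.val ((hbadj _).mp hq), rfl⟩))
      | some q' =>
          exact Or.inl ⟨hv, q'.2, hq⟩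
  have hNXc : ∀ (v : V) (hv : v ∈ Xᶜ),
      N.neighborSet v = (fun q : Option ↥Xᶜ => q.elim b'.1 Subtype.val) '' M'.neighborSet (some ⟨v, hv⟩) := by
    intro v hv
    ext u
    constructor
    · rintro (⟨h1, h2, h⟩ | ⟨h1, h2, h⟩ | ⟨rfl, rfl⟩ | ⟨rfl, rfl⟩)
      · exact absurd h1 hv
      · exact ⟨some ⟨u, h2⟩, h, rfl⟩
      · exact absurd b'.2 hv
      · exact ⟨none, (hwadj _).mpr (Subtype.ext rfl), rfl⟩
    · rintro ⟨q, hq, rfl⟩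
      cases q with
      | none =>
          exact Or.inr (Or.inr (Or.inr ⟨congrArg Subtype.val ((hwadj _).mp hq), rfl⟩))
      | some q' =>
          exact Or.inr (Or.inl ⟨hv, q'.2, hq⟩)
  refine ⟨N, fun v => trivial, ?_, ?_⟩
  · rw [hNX a.1 a.2, Set.ncard_image_of_injective _ hfinj]
    exact hMa3
  · intro u hu
    by_cases hX : u ∈ X
    · rw [hNX u hX, Set.ncard_image_of_injective _ hfinj]
      exact hMdeg1 (some ⟨u, hX⟩)
        (fun h => hu (congrArg Subtype.val (Option.some.inj h)))
    · rw [hNXc u hX, Set.ncard_image_of_injective _ hginj]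
      exact hM'1 _
end

section
/- Every vertex of a cubic brick G is λ-matchable; that is, for each vertex v of G there is a spanning subgraph in which v has degree 3 and every other vertex has degree 1. -/
open SimpleGraph Set

/-- `G` is bicritical: order at least four and `G − u − v` is matchable for all
distinct `u`, `v`. -/
def Bicritical {V : Type*} (G : SimpleGraph V) : Prop :=
  4 ≤ Nat.card V ∧ ∀ u v : V, u ≠ v → Matchable (G.induce ({u, v} : Set V)ᶜ)

/-- `G` is a brick: 3-connected and bicritical. -/
def IsBrick {V : Type*} (G : SimpleGraph V) : Prop :=
  KConnected 3 G ∧ Bicritical G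

/-- every vertex of a cubic brick is λ-matchable. -/
theorem cubic_brick_every_vertex_lambdaMatchable {V : Type*} [Fintype V]
    (G : SimpleGraph V) (hcub : IsCubic G) (hbrick : IsBrick G) :
    ∀ v : V, IsLambdaMatchable G v := by
  intro v
  obtain ⟨x, y, z, hxy, hxz, hyz, hNv⟩ := Set.ncard_eq_three.mp (hcub v)
  have hvx : G.Adj v x := by
    have : x ∈ G.neighborSet v := by rw [hNv]; simp
    exact this
  have hvy : G.Adj v y := by
    have : y ∈ G.neighborSet v := by rw [hNv]; simp
    exact this
  set S : Set V := ({x, y} : Set V)ᶜ with hS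
  have hvS : v ∈ S := by
    simp only [hS, Set.mem_compl_iff, Set.mem_insert_iff, Set.mem_singleton_iff]
    push_neg
    exact ⟨hvx.ne, hvy.ne⟩
  obtain ⟨M, hM⟩ := hbrick.2.2 x y hxy
  obtain ⟨a, haAdj, haUniq⟩ := hM.1 (hM.2 ⟨v, hvS⟩)
  -- the new subgraph
  refine ⟨{ verts := Set.univ
            Adj := fun p q =>
              (∃ (hp : p ∈ S) (hq : q ∈ S), M.Adj ⟨p, hp⟩ ⟨q, hq⟩) ∨
              (p = v ∧ (q = x ∨ q = y)) ∨ (q = v ∧ (p = x ∨ p = y))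
            adj_sub := ?_
            edge_vert := fun _ => trivial
            symm := ?_ }, fun _ => trivial, ?_, ?_⟩
  · rintro p q (⟨hp, hq, hadj⟩ | ⟨rfl, (rfl | rfl)⟩ | ⟨rfl, (rfl | rfl)⟩)
    · exact M.adj_sub hadj
    · exact hvx
    · exact hvy
    · exact hvx.symm
    · exact hvy.symm
  · constructor; rintro p q (⟨hp, hq, hadj⟩ | ⟨rfl, hq⟩ | ⟨rfl, hp⟩)
    · exact Or.inl ⟨hq, hp, hadj.symm⟩
    · exact Or.inr (Or.inr ⟨rfl, hq⟩)
    · exact Or.inr (Or.inl ⟨rfl, hp⟩)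
  -- degree of v is 3
  · have hset : ({w | (∃ (hp : v ∈ S) (hq : w ∈ S), M.Adj ⟨v, hp⟩ ⟨w, hq⟩) ∨
        (v = v ∧ (w = x ∨ w = y)) ∨ (w = v ∧ (v = x ∨ v = y))} : Set V) = {a.1, x, y} := by
      ext w
      constructor
      · rintro (⟨hp, hq, hadj⟩ | ⟨-, (rfl | rfl)⟩ | ⟨rfl, (h | h)⟩)
        · have := haUniq ⟨w, hq⟩ hadj
          left
          exact congrArg Subtype.val this
        · right; left; rfl
        · right; right; rfl
        · exact absurd h hvx.ne
        · exact absurd h hvy.ne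
      · rintro (rfl | rfl | rfl)
        · exact Or.inl ⟨hvS, a.2, haAdj⟩
        · exact Or.inr (Or.inl ⟨rfl, Or.inl rfl⟩)
        · exact Or.inr (Or.inl ⟨rfl, Or.inr rfl⟩)
    have haS : a.1 ∈ S := a.2
    have hax : a.1 ≠ x := by
      intro h; apply haS; simp [h]
    have hay : a.1 ≠ y := by
      intro h; apply haS; simp [h]
    show ({w | _} : Set V).ncard = 3
    rw [hset]
    exact Set.ncard_eq_three.mpr ⟨a.1, x, y, hax, hay, hxy, rfl⟩
  -- degree of others is 1
  · intro u huv
    have hsingle : ∀ (t : V), ({w | (∃ (hp : u ∈ S) (hq : w ∈ S), M.Adj ⟨u, hp⟩ ⟨w, hq⟩) ∨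
        (u = v ∧ (w = x ∨ w = y)) ∨ (w = v ∧ (u = x ∨ u = y))} : Set V) = {t} →
        ({w | (∃ (hp : u ∈ S) (hq : w ∈ S), M.Adj ⟨u, hp⟩ ⟨w, hq⟩) ∨
        (u = v ∧ (w = x ∨ w = y)) ∨ (w = v ∧ (u = x ∨ u = y))} : Set V).ncard = 1 := by
      intro t ht
      rw [ht]; exact Set.ncard_singleton t
    by_cases hux : u = x
    · subst hux
      apply hsingle v
      ext w
      constructor
      · rintro (⟨hp, hq, hadj⟩ | ⟨h, -⟩ | ⟨rfl, -⟩)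
        · exact absurd hp (by simp [hS])
        · exact absurd h huv
        · rfl
      · rintro rfl
        exact Or.inr (Or.inr ⟨rfl, Or.inl rfl⟩)
    by_cases huy : u = y
    · subst huy
      apply hsingle v
      ext w
      constructor
      · rintro (⟨hp, hq, hadj⟩ | ⟨h, -⟩ | ⟨rfl, -⟩)
        · exact absurd hp (by simp [hS])
        · exact absurd h huv
        · rfl
      · rintro rfl
        exact Or.inr (Or.inr ⟨rfl, Or.inr rfl⟩)
    · have huS : u ∈ S := by
        simp only [hS, Set.mem_compl_iff, Set.mem_insert_iff, Set.mem_singleton_iff]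
        push_neg
        exact ⟨hux, huy⟩
      obtain ⟨b, hbAdj, hbUniq⟩ := hM.1 (hM.2 ⟨u, huS⟩)
      apply hsingle b.1
      ext w
      constructor
      · rintro (⟨hp, hq, hadj⟩ | ⟨h, -⟩ | ⟨-, (h | h)⟩)
        · exact congrArg Subtype.val (hbUniq ⟨w, hq⟩ hadj)
        · exact absurd h huv
        · exact absurd h hux
        · exact absurd h huy
      · rintro rfl
        exact Or.inl ⟨huS, b.2, hbAdj⟩
end

section
/- Let H be a bipartite matching covered graph with color classes A and B, and suppose H − a₁ − a₂ − b₁ − b₂ has a perfect matching for all distinct a₁, a₂ ∈ A and distinct b₁, b₂ ∈ B (with |A| ≥ 3). Then for every nonempty subset A' of A with |A'| ≤ |A| − 2, we have |N_H(A')| ≥ |A'| + 2. -/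
open SimpleGraph Set

lemma matching_inj {V : Type*} [Fintype V] {G : SimpleGraph V} {M : G.Subgraph}
    (hM : M.IsPerfectMatching) {S T : Set V}
    (hST : ∀ a ∈ S, ∀ w, M.Adj a w → w ∈ T) : S.ncard ≤ T.ncard := by
  classical
  set f : V → V := fun a => (hM.1 (hM.2 a)).exists.choose with hf
  have hadj : ∀ a, M.Adj a (f a) := fun a => (hM.1 (hM.2 a)).exists.choose_spec
  apply Set.ncard_le_ncard_of_injOn f (fun a ha => hST a ha _ (hadj a))
  intro a ha a' ha' h
  exact (hM.1 (hM.2 (f a))).unique ((hadj a).symm) (h ▸ (hadj a').symm)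

lemma key_lemma {V : Type*} [Fintype V] {H : SimpleGraph V} {A' T Sset : Set V}
    (hm : ∃ M : (H.induce Ssetᶜ).Subgraph, M.IsPerfectMatching)
    (hA'S : A' ⊆ Ssetᶜ)
    (hT : ∀ a ∈ A', ∀ w ∉ Sset, H.Adj a w → w ∈ T) :
    A'.ncard ≤ T.ncard := by
  classical
  obtain ⟨M, hM⟩ := hm
  have h1 : (Subtype.val ⁻¹' A' : Set ↥Ssetᶜ).ncard ≤ (Subtype.val ⁻¹' T : Set ↥Ssetᶜ).ncard := by
    apply matching_inj hM
    rintro ⟨a, haS⟩ ha w hw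
    have hHadj : H.Adj a w.1 := M.adj_sub hw
    exact hT a ha w.1 w.2 hHadj
  have hrange : A' ⊆ Set.range (Subtype.val : ↥Ssetᶜ → V) := by
    rwa [Subtype.range_coe]
  have h2 : (Subtype.val '' (Subtype.val ⁻¹' A' : Set ↥Ssetᶜ)) = A' :=
    Set.image_preimage_eq_of_subset hrange
  have h3 : A'.ncard = (Subtype.val ⁻¹' A' : Set ↥Ssetᶜ).ncard := by
    conv_lhs => rw [← h2]
    exact Set.ncard_image_of_injective _ Subtype.val_injective
  have h4 : (Subtype.val ⁻¹' T : Set ↥Ssetᶜ).ncard ≤ T.ncard := by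
    rw [← Set.ncard_image_of_injective _ (Subtype.val_injective (p := (· ∈ Ssetᶜ)))]
    exact Set.ncard_le_ncard (Set.image_preimage_subset _ _) (Set.toFinite T)
  omega

/-- if `H[A,B]` is bipartite matching covered with `|A| ≥ 3` and
`H − a₁ − a₂ − b₁ − b₂` is matchable for all distinct `a₁, a₂ ∈ A` and distinct
`b₁, b₂ ∈ B`, then `|N(A')| ≥ |A'| + 2` for every nonempty `A' ⊆ A` with
`|A'| ≤ |A| − 2`. -/
theorem brace_neighborhood_bound {V : Type*} [Fintype V]
    (H : SimpleGraph V) (A B : Set V) (hbip : IsBipartitionOf H A B)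
    (hmc : MatchingCovered H) (hA : 3 ≤ A.ncard)
    (hquad : ∀ a₁ ∈ A, ∀ a₂ ∈ A, ∀ b₁ ∈ B, ∀ b₂ ∈ B, a₁ ≠ a₂ → b₁ ≠ b₂ →
      Matchable (H.induce ({a₁, a₂, b₁, b₂} : Set V)ᶜ)) :
    ∀ A' : Set V, A' ⊆ A → A'.Nonempty → A'.ncard ≤ A.ncard - 2 →
      A'.ncard + 2 ≤ (setNbhd H A').ncard := by
  classical
  obtain ⟨hunion, hdisj, hadjAB⟩ := hbip
  intro A' hsub hne hle
  have hA'notB : ∀ a ∈ A', a ∉ B := fun a ha => Set.disjoint_left.mp hdisj (hsub ha)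
  have hNB : setNbhd H A' ⊆ B := by
    rintro v ⟨a, haA', hadj⟩
    rcases hadjAB a v hadj with ⟨_, hvB⟩ | ⟨haB, _⟩
    · exact hvB
    · exact absurd haB (hA'notB a haA')
  -- two distinct elements of A \ A'
  have hcardle : A'.ncard ≤ A.ncard := Set.ncard_le_ncard hsub (Set.toFinite A)
  have hdiffcard : (A \ A').ncard = A.ncard - A'.ncard := Set.ncard_diff hsub (Set.toFinite A')
  obtain ⟨a₁, ha₁, a₂, ha₂, hane⟩ := (Set.one_lt_ncard (Set.toFinite _)).1
    (show 1 < (A \ A').ncard by omega)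
  -- main counting step
  have main : ∀ b₁ ∈ B, ∀ b₂ ∈ B, b₁ ≠ b₂ →
      A'.ncard ≤ (setNbhd H A' \ {b₁, b₂}).ncard := by
    intro b₁ hb₁ b₂ hb₂ hbne
    have hm := hquad a₁ ha₁.1 a₂ ha₂.1 b₁ hb₁ b₂ hb₂ hane hbne
    apply key_lemma hm
    · intro a ha
      simp only [Set.mem_compl_iff, Set.mem_insert_iff, Set.mem_singleton_iff]
      push_neg
      refine ⟨?_, ?_, ?_, ?_⟩
      · rintro rfl; exact ha₁.2 ha
      · rintro rfl; exact ha₂.2 ha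
      · rintro rfl; exact hA'notB _ ha hb₁
      · rintro rfl; exact hA'notB _ ha hb₂
    · intro a ha w hw hadj
      refine ⟨⟨a, ha, hadj⟩, ?_⟩
      intro hwmem
      apply hw
      simp only [Set.mem_insert_iff, Set.mem_singleton_iff] at hwmem ⊢
      tauto
  -- find a neighbor b₀ of A'
  obtain ⟨a₀, ha₀⟩ := hne
  have hcard2 : 1 < Fintype.card V := by
    have h := hmc.2.1; rwa [Nat.card_eq_fintype_card] at h
  obtain ⟨v, hv⟩ := Fintype.exists_ne_of_one_lt_card hcard2 a₀
  obtain ⟨w⟩ := hmc.1.preconnected a₀ v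
  have hedge : ∃ b, H.Adj a₀ b := by
    cases w with
    | nil => exact absurd rfl hv
    | cons h p => exact ⟨_, h⟩
  obtain ⟨b₀, hb₀adj⟩ := hedge
  have hb₀N : b₀ ∈ setNbhd H A' := ⟨a₀, ha₀, hb₀adj⟩
  have hb₀B : b₀ ∈ B := hNB hb₀N
  -- |B| ≥ 3
  have hBge : 3 ≤ B.ncard := by
    obtain ⟨M, hM, _⟩ := hmc.2.2 s(a₀, b₀) hb₀adj
    have hABle : A.ncard ≤ B.ncard := by
      apply matching_inj hM
      intro a ha w hw
      rcases hadjAB a w (M.adj_sub hw) with ⟨_, h⟩ | ⟨h, _⟩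
      · exact h
      · exact absurd h (Set.disjoint_left.mp hdisj ha)
    omega
  obtain ⟨b₂, hb₂B, hb₂ne⟩ := Set.exists_ne_of_one_lt_ncard (show 1 < B.ncard by omega) b₀
  -- stage 1: |N(A')| ≥ |A'| + 1 ≥ 2
  have hstage1 : A'.ncard + 1 ≤ (setNbhd H A').ncard := by
    have h := main b₀ hb₀B b₂ hb₂B (fun h => hb₂ne h.symm)
    have hsub1 : setNbhd H A' \ {b₀, b₂} ⊆ setNbhd H A' \ {b₀} := by
      intro x hx
      exact ⟨hx.1, fun h => hx.2 (by simp [Set.mem_singleton_iff.mp h])⟩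
    have h2 := Set.ncard_le_ncard hsub1 (Set.toFinite _)
    have heq := Set.ncard_diff_singleton_add_one hb₀N (Set.toFinite _)
    omega
  have hA'pos : 0 < A'.ncard := (Set.ncard_pos (Set.toFinite _)).2 ⟨a₀, ha₀⟩
  obtain ⟨c₁, hc₁, c₂, hc₂, hcne⟩ := (Set.one_lt_ncard (Set.toFinite _)).1
    (show 1 < (setNbhd H A').ncard by omega)
  have h := main c₁ (hNB hc₁) c₂ (hNB hc₂) hcne
  have hsub2 : ({c₁, c₂} : Set V) ⊆ setNbhd H A' := by
    rintro x (rfl | rfl)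
    · exact hc₁
    · exact hc₂
  have heq := Set.ncard_diff_add_ncard_of_subset hsub2 (Set.toFinite _)
  rw [Set.ncard_pair hcne] at heq
  omega
end

section
/- Let H be a cubic brace distinct from the 4-cycle with double edges (𝔸C₄), with color classes A and B. Then for every a ∈ A and b ∈ B, the pair (a,b) is λ-matchable: H has a spanning subgraph in which a and b both have degree 3 and every other vertex has degree 1. -/
open SimpleGraph Set

lemma pm_partner {W : Type*} {G : SimpleGraph W} {M : G.Subgraph}
    (h : M.IsPerfectMatching) :
    ∃ f : W → W, (∀ v, M.Adj v (f v)) ∧ ∀ v, f (f v) = v := by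
  have h' : ∀ v, ∃ w, M.Adj v w ∧ ∀ y, M.Adj v y → y = w :=
    SimpleGraph.Subgraph.isPerfectMatching_iff.mp h
  choose f hf hu using h'
  exact ⟨f, hf, fun v => (hu (f v) v (M.adj_symm (hf v))).symm⟩

lemma matchable_partner {V : Type*} {H : SimpleGraph V} {X : Set V}
    (h : Matchable (H.induce X)) :
    ∃ f : X → X, Function.Injective f ∧ ∀ x : X, H.Adj x.1 (f x).1 := by
  obtain ⟨M, hM⟩ := h
  obtain ⟨f, hf, hinv⟩ := pm_partner hM
  exact ⟨f, Function.LeftInverse.injective hinv, fun x => M.adj_sub (hf x)⟩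

/-- in a cubic brace distinct from `ℂ₄` (so simple, of order at
least six, characterized as a bipartite matching covered graph with `|A| ≥ 3`
such that deleting any two vertices of each colour class leaves a matchable
graph), every pair `(a, b)` with `a ∈ A`, `b ∈ B` is λ-matchable. -/
theorem cubic_brace_every_pair_lambdaMatchable {V : Type*} [Fintype V]
    (H : SimpleGraph V) (A B : Set V) (hbip : IsBipartitionOf H A B)
    (hcub : IsCubic H) (hmc : MatchingCovered H) (hA : 3 ≤ A.ncard)
    (hbrace : ∀ a₁ ∈ A, ∀ a₂ ∈ A, ∀ b₁ ∈ B, ∀ b₂ ∈ B, a₁ ≠ a₂ → b₁ ≠ b₂ →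
      Matchable (H.induce ({a₁, a₂, b₁, b₂} : Set V)ᶜ)) :
    ∀ a ∈ A, ∀ b ∈ B, IsLambdaMatchablePair H a b := by
  classical
  obtain ⟨hU, hdisj, hcross⟩ := hbip
  intro a ha b hb
  have hABmem : ∀ v : V, v ∈ A ∨ v ∈ B := by
    intro v
    have : v ∈ A ∪ B := by rw [hU]; trivial
    exact this
  have hnAB : ∀ v, v ∈ A → v ∉ B := fun v hv => Set.disjoint_left.mp hdisj hv
  have hAB : ∀ u v, u ∈ A → H.Adj u v → v ∈ B := by
    intro u v hu hadj
    rcases hcross u v hadj with ⟨_, h⟩ | ⟨h, _⟩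
    · exact h
    · exact absurd hu (fun hu' => hnAB u hu' h)
  have hBA : ∀ u v, u ∈ B → H.Adj u v → v ∈ A := by
    intro u v hu hadj
    rcases hcross u v hadj with ⟨h, _⟩ | ⟨_, h⟩
    · exact absurd h (fun h' => hnAB u h' hu)
    · exact h
  have hab : a ≠ b := fun h => hnAB a ha (h ▸ hb)
  set NF : V → Finset V := fun v => (H.neighborSet v).toFinite.toFinset with hNF
  have hNFmem : ∀ u v : V, v ∈ NF u ↔ H.Adj u v := by
    intro u v; simp [hNF, Set.Finite.mem_toFinset, SimpleGraph.mem_neighborSet]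
  have hNFcard : ∀ u : V, (NF u).card = 3 := by
    intro u
    have := hcub u
    rwa [Set.ncard_eq_toFinset_card _ (H.neighborSet u).toFinite] at this
  set Af : Finset V := A.toFinite.toFinset with hAfdef
  set Bf : Finset V := B.toFinite.toFinset with hBfdef
  have hAf : ∀ v, v ∈ Af ↔ v ∈ A := fun v => Set.Finite.mem_toFinset _
  have hBf : ∀ v, v ∈ Bf ↔ v ∈ B := fun v => Set.Finite.mem_toFinset _
  -- |A| = |B| via a perfect matching of H
  have hcardAB : Af.card = Bf.card := by
    have hnt : Nontrivial V := Fintype.one_lt_card_iff_nontrivial.mp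
      (by rw [← Nat.card_eq_fintype_card]; exact hmc.2.1)
    obtain ⟨u, v, huv⟩ := hnt
    obtain ⟨w⟩ := hmc.1.preconnected u v
    have hedge : ∃ x y : V, H.Adj x y := by
      cases w with
      | nil => exact absurd rfl huv
      | cons h p => exact ⟨_, _, h⟩
    obtain ⟨x, y, hxy⟩ := hedge
    obtain ⟨M, hPM, -⟩ := hmc.2.2 s(x, y) (H.mem_edgeSet.mpr hxy)
    obtain ⟨g, hg, hginv⟩ := pm_partner hPM
    have hgadj : ∀ v, H.Adj v (g v) := fun v => M.adj_sub (hg v)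
    have hginj : Function.Injective g := Function.LeftInverse.injective hginv
    refine le_antisymm ?_ ?_
    · exact Finset.card_le_card_of_injOn g
        (fun z hz => (hBf _).mpr (hAB z (g z) ((hAf z).mp hz) (hgadj z))) hginj.injOn
    · exact Finset.card_le_card_of_injOn g
        (fun z hz => (hAf _).mpr (hBA z (g z) ((hBf z).mp hz) (hgadj z))) hginj.injOn
  -- the brace surplus property
  have surplus : ∀ S : Finset V, ↑S ⊆ A → 2 ≤ S.card → S.card + 2 ≤ Af.card →
      S.card + 2 ≤ (S.biUnion NF).card := by
    intro S hSA h2 hup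
    by_contra hcon
    push_neg at hcon
    set W := S.biUnion NF with hWdef
    have hWcard : W.card ≤ S.card + 1 := by omega
    obtain ⟨s₁, hs₁⟩ := Finset.card_pos.mp (by omega : 0 < S.card)
    have hNs₁ : NF s₁ ⊆ W := Finset.subset_biUnion_of_mem NF hs₁
    have hW3 : 3 ≤ W.card := hNFcard s₁ ▸ Finset.card_le_card hNs₁
    obtain ⟨b₁, hb₁, b₂, hb₂, hbne⟩ := Finset.one_lt_card.mp (by omega : 1 < W.card)
    have hWB : ∀ w ∈ W, w ∈ B := by
      intro w hw
      obtain ⟨s, hs, hw'⟩ := Finset.mem_biUnion.mp hw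
      exact hAB s w (hSA hs) ((hNFmem s w).mp hw')
    have hSAf : S ⊆ Af := fun z hz => (hAf z).mpr (hSA hz)
    have hAS : 2 ≤ (Af \ S).card := by
      rw [Finset.card_sdiff_of_subset hSAf]; omega
    obtain ⟨a₁, ha₁, a₂, ha₂, hane⟩ := Finset.one_lt_card.mp (by omega : 1 < (Af \ S).card)
    have ha₁A : a₁ ∈ A := (hAf _).mp (Finset.mem_sdiff.mp ha₁).1
    have ha₂A : a₂ ∈ A := (hAf _).mp (Finset.mem_sdiff.mp ha₂).1
    obtain ⟨p, hpinj, hpadj⟩ :=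
      matchable_partner (hbrace a₁ ha₁A a₂ ha₂A b₁ (hWB b₁ hb₁) b₂ (hWB b₂ hb₂) hane hbne)
    have hmemC : ∀ s ∈ S, s ∈ ({a₁, a₂, b₁, b₂} : Set V)ᶜ := by
      intro s hs
      simp only [Set.mem_compl_iff, Set.mem_insert_iff, Set.mem_singleton_iff]
      push_neg
      refine ⟨?_, ?_, ?_, ?_⟩
      · rintro rfl; exact (Finset.mem_sdiff.mp ha₁).2 hs
      · rintro rfl; exact (Finset.mem_sdiff.mp ha₂).2 hs
      · rintro rfl; exact hnAB _ (hSA hs) (hWB _ hb₁)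
      · rintro rfl; exact hnAB _ (hSA hs) (hWB _ hb₂)
    set g : V → V := fun u =>
      if h : u ∈ ({a₁, a₂, b₁, b₂} : Set V)ᶜ then (p ⟨u, h⟩).1 else u with hgdef
    have hgeq : ∀ s (hs : s ∈ ({a₁, a₂, b₁, b₂} : Set V)ᶜ), g s = (p ⟨s, hs⟩).1 := by
      intro s hs; simp only [hgdef, dif_pos hs]
    have hgS : ∀ s ∈ S, g s ∈ W \ {b₁, b₂} := by
      intro s hs
      have hc := hmemC s hs
      rw [hgeq s hc, Finset.mem_sdiff]
      constructor
      · exact Finset.mem_biUnion.mpr ⟨s, hs, (hNFmem _ _).mpr (hpadj ⟨s, hc⟩)⟩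
      · have hmem := (p ⟨s, hc⟩).2
        simp only [Set.mem_compl_iff, Set.mem_insert_iff, Set.mem_singleton_iff] at hmem
        push_neg at hmem
        simp only [Finset.mem_insert, Finset.mem_singleton]
        push_neg
        exact ⟨hmem.2.2.1, hmem.2.2.2⟩
    have hginj : Set.InjOn g S := by
      intro s hs t ht he
      have hcs := hmemC s hs; have hct := hmemC t ht
      rw [hgeq s hcs, hgeq t hct] at he
      have := hpinj (Subtype.ext he)
      exact congrArg Subtype.val this
    have hcard := Finset.card_le_card_of_injOn g hgS hginj
    have hsub : ({b₁, b₂} : Finset V) ⊆ W := by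
      intro z hz
      rcases Finset.mem_insert.mp hz with rfl | hz
      · exact hb₁
      · exact (Finset.mem_singleton.mp hz) ▸ hb₂
    rw [Finset.card_sdiff_of_subset hsub, Finset.card_pair hbne] at hcard
    omega
  set RA : Finset V := insert a (NF b) with hRAdef
  set RB : Finset V := insert b (NF a) with hRBdef
  have hRAsub : RA ⊆ Af := by
    intro v hv
    rcases Finset.mem_insert.mp hv with rfl | hv
    · exact (hAf v).mpr ha
    · exact (hAf v).mpr (hBA b v hb ((hNFmem b v).mp hv))
  have hRBsub : RB ⊆ Bf := by
    intro v hv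
    rcases Finset.mem_insert.mp hv with rfl | hv
    · exact (hBf v).mpr hb
    · exact (hBf v).mpr (hAB a v ha ((hNFmem a v).mp hv))
  have hRAcard3 : 3 ≤ RA.card :=
    hNFcard b ▸ Finset.card_le_card (Finset.subset_insert _ _)
  have hcardRARB : RA.card = RB.card := by
    by_cases hadj : H.Adj a b
    · have h1 : a ∈ NF b := (hNFmem b a).mpr (H.adj_symm hadj)
      have h2 : b ∈ NF a := (hNFmem a b).mpr hadj
      rw [hRAdef, hRBdef, Finset.insert_eq_self.mpr h1, Finset.insert_eq_self.mpr h2,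
        hNFcard, hNFcard]
    · have h1 : a ∉ NF b := fun h => hadj (H.adj_symm ((hNFmem b a).mp h))
      have h2 : b ∉ NF a := fun h => hadj ((hNFmem a b).mp h)
      rw [hRAdef, hRBdef, Finset.card_insert_of_notMem h1, Finset.card_insert_of_notMem h2,
        hNFcard, hNFcard]
  set A' : Finset V := Af \ RA with hA'def
  set B' : Finset V := Bf \ RB with hB'def
  have hcardA'B' : A'.card = B'.card := by
    rw [hA'def, hB'def, Finset.card_sdiff_of_subset hRAsub, Finset.card_sdiff_of_subset hRBsub, hcardAB, hcardRARB]
  -- Hall's condition for the graph induced on the untouched vertices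
  have hall : ∀ S : Finset V, ↑S ⊆ (A' : Set V) → S.card ≤ ((S.biUnion NF) \ RB).card := by
    intro S hS
    rcases S.eq_empty_or_nonempty with rfl | hne
    · simp
    by_contra hcon
    push_neg at hcon
    set W := S.biUnion NF with hWdef
    have hSA' : ∀ s ∈ S, s ∈ A' := fun s hs => hS hs
    have hSA : ↑S ⊆ A := fun s hs => (hAf s).mp (Finset.mem_sdiff.mp (hSA' s hs)).1
    have hbW : b ∉ W := by
      intro hbw
      obtain ⟨s, hs, hw⟩ := Finset.mem_biUnion.mp hbw
      have h1 : s ∈ NF b := (hNFmem b s).mpr (H.adj_symm ((hNFmem s b).mp hw))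
      exact (Finset.mem_sdiff.mp (hSA' s hs)).2 (Finset.mem_insert_of_mem h1)
    have hWsub : W ⊆ NF a ∪ (W \ RB) := by
      intro w hw
      by_cases hwRB : w ∈ RB
      · rcases Finset.mem_insert.mp hwRB with rfl | h
        · exact absurd hw hbW
        · exact Finset.mem_union_left _ h
      · exact Finset.mem_union_right _ (Finset.mem_sdiff.mpr ⟨hw, hwRB⟩)
    have haS : a ∉ S := fun h =>
      (Finset.mem_sdiff.mp (hSA' a h)).2 (Finset.mem_insert_self _ _)
    have hScard : 0 < S.card := Finset.card_pos.mpr hne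
    have hSpcard : (insert a S : Finset V).card = S.card + 1 :=
      Finset.card_insert_of_notMem haS
    have hSpA : ↑(insert a S : Finset V) ⊆ A := by
      intro z hz
      rw [Finset.mem_coe, Finset.mem_insert] at hz
      rcases hz with rfl | hz
      · exact ha
      · exact hSA hz
    have hsize : S.card + 3 ≤ Af.card := by
      have h2 : S.card ≤ A'.card := Finset.card_le_card (fun s hs => hSA' s hs)
      have h3 : A'.card = Af.card - RA.card := Finset.card_sdiff_of_subset hRAsub
      have h4 : RA.card ≤ Af.card := Finset.card_le_card hRAsub
      omega
    have hsur := surplus (insert a S) hSpA (by omega) (by omega)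
    rw [Finset.biUnion_insert, ← hWdef] at hsur
    have hle : (NF a ∪ W).card ≤ 3 + (W \ RB).card := by
      calc (NF a ∪ W).card ≤ (NF a ∪ (W \ RB)).card := by
            refine Finset.card_le_card ?_
            intro z hz
            rcases Finset.mem_union.mp hz with h | h
            · exact Finset.mem_union_left _ h
            · exact hWsub h
        _ ≤ (NF a).card + (W \ RB).card := Finset.card_union_le _ _
        _ = 3 + (W \ RB).card := by rw [hNFcard]
    omega
  -- Hall's theorem gives the matching on the untouched vertices
  obtain ⟨f, hfinj, hfmem⟩ : ∃ f : {x // x ∈ A'} → V, Function.Injective f ∧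
      ∀ x, f x ∈ NF x.1 \ RB := by
    refine (Finset.all_card_le_biUnion_card_iff_exists_injective
      (fun x : {x // x ∈ A'} => NF x.1 \ RB)).mp ?_
    intro s
    set S := s.image Subtype.val with hSdef
    have hScard : S.card = s.card := Finset.card_image_of_injective _ Subtype.val_injective
    have hsub : ↑S ⊆ (A' : Set V) := by
      intro z hz
      rw [Finset.mem_coe, hSdef, Finset.mem_image] at hz
      obtain ⟨y, hy, rfl⟩ := hz
      exact y.2
    have h := hall S hsub
    have hbi : s.biUnion (fun x => NF x.1 \ RB) = (S.biUnion NF) \ RB := by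
      ext w
      simp only [Finset.mem_biUnion, Finset.mem_sdiff, hSdef, Finset.mem_image]
      constructor
      · rintro ⟨x, hx, hw, hwRB⟩
        exact ⟨⟨x.1, ⟨x, hx, rfl⟩, hw⟩, hwRB⟩
      · rintro ⟨⟨v, ⟨x, hx, rfl⟩, hw⟩, hwRB⟩
        exact ⟨x, hx, hw, hwRB⟩
    rw [hbi]
    omega
  have hfadj : ∀ x : {x // x ∈ A'}, H.Adj x.1 (f x) :=
    fun x => (hNFmem _ _).mp (Finset.mem_sdiff.mp (hfmem x)).1
  have hfB' : ∀ x, f x ∈ B' := by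
    intro x
    rw [hB'def, Finset.mem_sdiff]
    exact ⟨(hBf _).mpr (hAB x.1 (f x) ((hAf _).mp (Finset.mem_sdiff.mp x.2).1) (hfadj x)),
      (Finset.mem_sdiff.mp (hfmem x)).2⟩
  have hfsurj : ∀ w ∈ B', ∃ x, f x = w := by
    have himg : Finset.univ.image f ⊆ B' := by
      intro w hw
      obtain ⟨x, -, rfl⟩ := Finset.mem_image.mp hw
      exact hfB' x
    have hc : B'.card ≤ (Finset.univ.image f).card := by
      rw [Finset.card_image_of_injective _ hfinj, Finset.card_univ, Fintype.card_coe]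
      omega
    have heq : Finset.univ.image f = B' := Finset.eq_of_subset_of_card_le himg hc
    intro w hw
    rw [← heq] at hw
    obtain ⟨x, -, hx⟩ := Finset.mem_image.mp hw
    exact ⟨x, hx⟩
  -- construct the subgraph
  let M : H.Subgraph :=
    { verts := Set.univ
      Adj := fun u v => (u = a ∧ H.Adj a v) ∨ (v = a ∧ H.Adj u a) ∨
        (u = b ∧ H.Adj b v) ∨ (v = b ∧ H.Adj u b) ∨
        (∃ x : {y // y ∈ A'}, (u = x.1 ∧ v = f x) ∨ (v = x.1 ∧ u = f x))
      adj_sub := by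
        rintro u v (⟨rfl, h⟩ | ⟨rfl, h⟩ | ⟨rfl, h⟩ | ⟨rfl, h⟩ | ⟨x, ⟨rfl, rfl⟩ | ⟨rfl, rfl⟩⟩)
        · exact h
        · exact h
        · exact h
        · exact h
        · exact hfadj x
        · exact H.adj_symm (hfadj x)
      edge_vert := fun _ => Set.mem_univ _
      symm := by
        constructor
        rintro u v (⟨rfl, h⟩ | ⟨rfl, h⟩ | ⟨rfl, h⟩ | ⟨rfl, h⟩ | ⟨x, ⟨rfl, rfl⟩ | ⟨rfl, rfl⟩⟩)
        · exact Or.inr (Or.inl ⟨rfl, H.adj_symm h⟩)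
        · exact Or.inl ⟨rfl, H.adj_symm h⟩
        · exact Or.inr (Or.inr (Or.inr (Or.inl ⟨rfl, H.adj_symm h⟩)))
        · exact Or.inr (Or.inr (Or.inl ⟨rfl, H.adj_symm h⟩))
        · exact Or.inr (Or.inr (Or.inr (Or.inr ⟨x, Or.inr ⟨rfl, rfl⟩⟩)))
        · exact Or.inr (Or.inr (Or.inr (Or.inr ⟨x, Or.inl ⟨rfl, rfl⟩⟩))) }
  have hMadj : ∀ u v, M.Adj u v ↔ ((u = a ∧ H.Adj a v) ∨ (v = a ∧ H.Adj u a) ∨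
      (u = b ∧ H.Adj b v) ∨ (v = b ∧ H.Adj u b) ∨
      (∃ x : {y // y ∈ A'}, (u = x.1 ∧ v = f x) ∨ (v = x.1 ∧ u = f x))) :=
    fun _ _ => Iff.rfl
  have hNa : M.neighborSet a = H.neighborSet a := by
    ext v
    rw [SimpleGraph.Subgraph.mem_neighborSet, SimpleGraph.mem_neighborSet, hMadj]
    constructor
    · rintro (⟨-, h⟩ | ⟨rfl, h⟩ | ⟨h1, h2⟩ | ⟨rfl, h⟩ | ⟨x, ⟨h1, h2⟩ | ⟨h1, h2⟩⟩)
      · exact h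
      · exact absurd h (H.irrefl)
      · exact absurd h1 hab
      · exact h
      · exfalso
        have hx := x.2
        rw [← h1] at hx
        exact (Finset.mem_sdiff.mp hx).2 (Finset.mem_insert_self _ _)
      · exfalso
        have hx := hfB' x
        rw [← h2] at hx
        exact hnAB a ha ((hBf a).mp (Finset.mem_sdiff.mp hx).1)
    · intro h
      exact Or.inl ⟨rfl, h⟩
  have hNb : M.neighborSet b = H.neighborSet b := by
    ext v
    rw [SimpleGraph.Subgraph.mem_neighborSet, SimpleGraph.mem_neighborSet, hMadj]
    constructor
    · rintro (⟨h1, h2⟩ | ⟨rfl, h⟩ | ⟨-, h⟩ | ⟨rfl, h⟩ | ⟨x, ⟨h1, h2⟩ | ⟨h1, h2⟩⟩)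
      · exact absurd h1 hab.symm
      · exact h
      · exact h
      · exact absurd h (H.irrefl)
      · exfalso
        have hx : x.1 ∈ A := (hAf _).mp (Finset.mem_sdiff.mp x.2).1
        rw [← h1] at hx
        exact hnAB b hx hb
      · exfalso
        have hx := hfB' x
        rw [← h2] at hx
        exact (Finset.mem_sdiff.mp hx).2 (Finset.mem_insert_self _ _)
    · intro h
      exact Or.inr (Or.inr (Or.inl ⟨rfl, h⟩))
  have key : ∀ u, u ≠ a → u ≠ b → ∃ w, M.neighborSet u = {w} := by
    intro u hua hub
    rcases hABmem u with huA | huB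
    · by_cases hu' : u ∈ NF b
      · refine ⟨b, ?_⟩
        ext v
        rw [SimpleGraph.Subgraph.mem_neighborSet, Set.mem_singleton_iff, hMadj]
        constructor
        · rintro (⟨h1, h2⟩ | ⟨h1, h2⟩ | ⟨h1, h2⟩ | ⟨h1, h2⟩ | ⟨x, ⟨h1, h2⟩ | ⟨h1, h2⟩⟩)
          · exact absurd h1 hua
          · exact absurd ha (fun ha' => hnAB a ha' (hAB u a huA h2))
          · exact absurd h1 hub
          · exact h1
          · exfalso
            have hx := x.2
            rw [← h1] at hx
            exact (Finset.mem_sdiff.mp hx).2 (Finset.mem_insert_of_mem hu')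
          · exfalso
            have hx := hfB' x
            rw [← h2] at hx
            exact hnAB u huA ((hBf u).mp (Finset.mem_sdiff.mp hx).1)
        · intro hv
          rw [hv]
          exact Or.inr (Or.inr (Or.inr (Or.inl ⟨rfl, H.adj_symm ((hNFmem b u).mp hu')⟩)))
      · have huA' : u ∈ A' := by
          rw [hA'def, Finset.mem_sdiff]
          refine ⟨(hAf u).mpr huA, ?_⟩
          intro hmem
          rcases Finset.mem_insert.mp hmem with rfl | h
          · exact hua rfl
          · exact hu' h
        refine ⟨f ⟨u, huA'⟩, ?_⟩
        ext v
        rw [SimpleGraph.Subgraph.mem_neighborSet, Set.mem_singleton_iff, hMadj]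
        constructor
        · rintro (⟨h1, h2⟩ | ⟨h1, h2⟩ | ⟨h1, h2⟩ | ⟨h1, h2⟩ | ⟨x, ⟨h1, h2⟩ | ⟨h1, h2⟩⟩)
          · exact absurd h1 hua
          · exact absurd ha (fun ha' => hnAB a ha' (hAB u a huA h2))
          · exact absurd h1 hub
          · exact absurd ((hNFmem b u).mpr (H.adj_symm h2)) hu'
          · have hx : x = ⟨u, huA'⟩ := Subtype.ext h1.symm
            rw [h2, hx]
          · exfalso
            have hx := hfB' x
            rw [← h2] at hx
            exact hnAB u huA ((hBf u).mp (Finset.mem_sdiff.mp hx).1)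
        · rintro rfl
          exact Or.inr (Or.inr (Or.inr (Or.inr ⟨⟨u, huA'⟩, Or.inl ⟨rfl, rfl⟩⟩)))
    · by_cases hu' : u ∈ NF a
      · refine ⟨a, ?_⟩
        ext v
        rw [SimpleGraph.Subgraph.mem_neighborSet, Set.mem_singleton_iff, hMadj]
        constructor
        · rintro (⟨h1, h2⟩ | ⟨h1, h2⟩ | ⟨h1, h2⟩ | ⟨h1, h2⟩ | ⟨x, ⟨h1, h2⟩ | ⟨h1, h2⟩⟩)
          · exact absurd h1 hua
          · exact h1
          · exact absurd h1 hub
          · exact absurd hb (fun hb' => hnAB b (hBA u b huB h2) hb')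
          · exfalso
            have hx : x.1 ∈ A := (hAf _).mp (Finset.mem_sdiff.mp x.2).1
            rw [← h1] at hx
            exact hnAB u hx huB
          · exfalso
            have hx := hfB' x
            rw [← h2] at hx
            exact (Finset.mem_sdiff.mp hx).2 (Finset.mem_insert_of_mem hu')
        · intro hv
          rw [hv]
          exact Or.inr (Or.inl ⟨rfl, H.adj_symm ((hNFmem a u).mp hu')⟩)
      · have huB' : u ∈ B' := by
          rw [hB'def, Finset.mem_sdiff]
          refine ⟨(hBf u).mpr huB, ?_⟩
          intro hmem
          rcases Finset.mem_insert.mp hmem with rfl | h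
          · exact hub rfl
          · exact hu' h
        obtain ⟨x₀, hx₀⟩ := hfsurj u huB'
        refine ⟨x₀.1, ?_⟩
        ext v
        rw [SimpleGraph.Subgraph.mem_neighborSet, Set.mem_singleton_iff, hMadj]
        constructor
        · rintro (⟨h1, h2⟩ | ⟨h1, h2⟩ | ⟨h1, h2⟩ | ⟨h1, h2⟩ | ⟨x, ⟨h1, h2⟩ | ⟨h1, h2⟩⟩)
          · exact absurd h1 hua
          · exact absurd ((hNFmem a u).mpr (H.adj_symm h2)) hu'
          · exact absurd h1 hub
          · exact absurd hb (fun hb' => hnAB b (hBA u b huB h2) hb')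
          · exfalso
            have hx : x.1 ∈ A := (hAf _).mp (Finset.mem_sdiff.mp x.2).1
            rw [← h1] at hx
            exact hnAB u hx huB
          · have hx : x = x₀ := hfinj (by rw [hx₀, ← h2])
            rw [h1, hx]
        · rintro rfl
          exact Or.inr (Or.inr (Or.inr (Or.inr ⟨x₀, Or.inr ⟨rfl, hx₀.symm⟩⟩)))
  refine ⟨M, fun v => Set.mem_univ v, ?_, ?_, ?_⟩
  · rw [hNa]; exact hcub a
  · rw [hNb]; exact hcub b
  · intro u hua hub
    obtain ⟨w, hw⟩ := key u hua hub
    rw [hw]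
    exact Set.ncard_singleton w
end

section
/- An odd cut ∂(X) of a bipartite matching covered graph H[A,B] is tight if and only if (i) |X⁺| = |X⁻| + 1 and (ii) there is no edge with one end in X⁻ and the other end in X̄⁻. Consequently, if ∂(X) is tight then both ∂(X)-contractions are bipartite. -/
open SimpleGraph Set

/-- `X⁺`: the larger of `X ∩ A` and `X ∩ B`. -/
noncomputable def shorePlus {V : Type*} (A B X : Set V) : Set V :=
  if (X ∩ A).ncard ≥ (X ∩ B).ncard then X ∩ A else X ∩ B

/-- `X⁻`: the smaller of `X ∩ A` and `X ∩ B`. -/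
noncomputable def shoreMinus {V : Type*} (A B X : Set V) : Set V :=
  if (X ∩ A).ncard ≥ (X ∩ B).ncard then X ∩ B else X ∩ A



noncomputable def pmFun {V : Type*} {H : SimpleGraph V} {M : H.Subgraph}
    (hM : M.IsPerfectMatching) (v : V) : V :=
  (hM.1 (hM.2 v)).choose

lemma pmFun_adj {V : Type*} {H : SimpleGraph V} {M : H.Subgraph}
    (hM : M.IsPerfectMatching) (v : V) : M.Adj v (pmFun hM v) :=
  (hM.1 (hM.2 v)).choose_spec.1

lemma pmFun_eq_of_adj {V : Type*} {H : SimpleGraph V} {M : H.Subgraph}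
    (hM : M.IsPerfectMatching) {v w : V} (h : M.Adj v w) : pmFun hM v = w :=
  ((hM.1 (hM.2 v)).choose_spec.2 w h).symm

lemma pmFun_invol {V : Type*} {H : SimpleGraph V} {M : H.Subgraph}
    (hM : M.IsPerfectMatching) (v : V) : pmFun hM (pmFun hM v) = v :=
  pmFun_eq_of_adj hM (pmFun_adj hM v).symm

lemma pmFun_inj {V : Type*} {H : SimpleGraph V} {M : H.Subgraph}
    (hM : M.IsPerfectMatching) : Function.Injective (pmFun hM) :=
  Function.Involutive.injective (pmFun_invol hM)

lemma cut_card {V : Type*} [Fintype V] {H : SimpleGraph V} (X : Set V) {M : H.Subgraph}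
    (hM : M.IsPerfectMatching) :
    (M.edgeSet ∩ cutEdges H X).ncard = {u : V | u ∈ X ∧ pmFun hM u ∉ X}.ncard := by
  have himg : M.edgeSet ∩ cutEdges H X
      = (fun u => s(u, pmFun hM u)) '' {u : V | u ∈ X ∧ pmFun hM u ∉ X} := by
    ext e
    constructor
    · rintro ⟨heM, -, u, v, rfl, huX, hvX⟩
      have hadj : M.Adj u v := (SimpleGraph.Subgraph.mem_edgeSet).1 heM
      have := pmFun_eq_of_adj hM hadj
      exact ⟨u, ⟨huX, this ▸ hvX⟩, by simp [this]⟩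
    · rintro ⟨u, ⟨huX, hfX⟩, rfl⟩
      have hadj : M.Adj u (pmFun hM u) := pmFun_adj hM u
      exact ⟨(SimpleGraph.Subgraph.mem_edgeSet).2 hadj,
        (SimpleGraph.mem_edgeSet H).2 (M.adj_sub hadj), u, pmFun hM u, rfl, huX, hfX⟩
  rw [himg]
  apply Set.ncard_image_of_injOn
  intro u hu u' hu' heq
  rcases Sym2.eq_iff.mp heq with ⟨h1, -⟩ | ⟨h1, h2⟩
  · exact h1
  · exact absurd (h1 ▸ hu'.2) (not_not_intro hu.1)

lemma bip_symm {V : Type*} {H : SimpleGraph V} {A B : Set V} (h : IsBipartitionOf H A B) :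
    IsBipartitionOf H B A :=
  ⟨by rw [Set.union_comm]; exact h.1, h.2.1.symm, fun u v huv => (h.2.2 u v huv).symm⟩

lemma mem_B_of_adj {V : Type*} {H : SimpleGraph V} {A B : Set V} (hbip : IsBipartitionOf H A B)
    {u v : V} (hu : u ∈ A) (h : H.Adj u v) : v ∈ B := by
  rcases hbip.2.2 u v h with ⟨-, hv⟩ | ⟨hu', -⟩
  · exact hv
  · exact absurd hu (Set.disjoint_right.mp hbip.2.1 hu')

lemma balance {V : Type*} [Fintype V] {H : SimpleGraph V} {A B : Set V}
    (hbip : IsBipartitionOf H A B) (X : Set V) {M : H.Subgraph} (hM : M.IsPerfectMatching) :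
    (X ∩ A).ncard + {u : V | u ∈ X ∩ B ∧ pmFun hM u ∉ X}.ncard
      = (X ∩ B).ncard + {u : V | u ∈ X ∩ A ∧ pmFun hM u ∉ X}.ncard := by
  set f := pmFun hM with hf
  have hsplit : ∀ C : Set V, (X ∩ C) = {u : V | u ∈ X ∩ C ∧ f u ∈ X} ∪ {u : V | u ∈ X ∩ C ∧ f u ∉ X} := by
    intro C; ext u; by_cases h : f u ∈ X <;> simp [h]
  have hd : ∀ C : Set V, Disjoint {u : V | u ∈ X ∩ C ∧ f u ∈ X} {u : V | u ∈ X ∩ C ∧ f u ∉ X} := by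
    intro C; rw [Set.disjoint_left]; rintro u ⟨-, h1⟩ ⟨-, h2⟩; exact h2 h1
  have hA := hsplit A; have hB := hsplit B
  have hcA : (X ∩ A).ncard = {u : V | u ∈ X ∩ A ∧ f u ∈ X}.ncard + {u : V | u ∈ X ∩ A ∧ f u ∉ X}.ncard := by
    conv_lhs => rw [hA]
    exact Set.ncard_union_eq (hd A) (Set.toFinite _) (Set.toFinite _)
  have hcB : (X ∩ B).ncard = {u : V | u ∈ X ∩ B ∧ f u ∈ X}.ncard + {u : V | u ∈ X ∩ B ∧ f u ∉ X}.ncard := by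
    conv_lhs => rw [hB]
    exact Set.ncard_union_eq (hd B) (Set.toFinite _) (Set.toFinite _)
  have hIm : f '' {u : V | u ∈ X ∩ A ∧ f u ∈ X} = {u : V | u ∈ X ∩ B ∧ f u ∈ X} := by
    ext v
    constructor
    · rintro ⟨u, ⟨⟨huX, huA⟩, hfuX⟩, rfl⟩
      have hadj : H.Adj u (f u) := M.adj_sub (pmFun_adj hM u)
      refine ⟨⟨hfuX, mem_B_of_adj hbip huA hadj⟩, ?_⟩
      rw [hf, pmFun_invol hM u]; exact huX
    · rintro ⟨⟨hvX, hvB⟩, hfvX⟩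
      refine ⟨f v, ⟨⟨hfvX, ?_⟩, ?_⟩, ?_⟩
      · have hadj : H.Adj v (f v) := M.adj_sub (pmFun_adj hM v)
        exact mem_B_of_adj (bip_symm hbip) hvB hadj
      · rw [hf, pmFun_invol hM v]; exact hvX
      · rw [hf, pmFun_invol hM v]
  have hIeq : {u : V | u ∈ X ∩ A ∧ f u ∈ X}.ncard = {u : V | u ∈ X ∩ B ∧ f u ∈ X}.ncard := by
    rw [← hIm]; exact (Set.ncard_image_of_injective _ (pmFun_inj hM)).symm
  omega

lemma cardAB {V : Type*} [Fintype V] {H : SimpleGraph V} {A B : Set V}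
    (hbip : IsBipartitionOf H A B) {M : H.Subgraph} (hM : M.IsPerfectMatching) :
    A.ncard = B.ncard := by
  set f := pmFun hM with hf
  have hIm : f '' A = B := by
    ext v
    constructor
    · rintro ⟨u, huA, rfl⟩
      exact mem_B_of_adj hbip huA (M.adj_sub (pmFun_adj hM u))
    · intro hvB
      refine ⟨f v, mem_B_of_adj (bip_symm hbip) hvB (M.adj_sub (pmFun_adj hM v)), ?_⟩
      rw [hf, pmFun_invol hM v]
  rw [← hIm]; exact (Set.ncard_image_of_injective _ (pmFun_inj hM)).symm

lemma part_card {V : Type*} [Fintype V] (X C : Set V) :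
    C.ncard = (X ∩ C).ncard + (Xᶜ ∩ C).ncard := by
  rw [← Set.ncard_union_eq (by
      rw [Set.disjoint_left]; rintro u ⟨h1, -⟩ ⟨h2, -⟩; exact h2 h1)
    (Set.toFinite _) (Set.toFinite _)]
  congr 1
  ext u; by_cases h : u ∈ X <;> simp [h]

lemma exists_pm {V : Type*} [Fintype V] {H : SimpleGraph V} (hmc : MatchingCovered H) :
    ∃ M : H.Subgraph, M.IsPerfectMatching := by
  obtain ⟨hconn, hcard, hcov⟩ := hmc
  have : 1 < Fintype.card V := by
    have := Nat.card_eq_fintype_card (α := V); omega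
  obtain ⟨u, v, huv⟩ := Fintype.exists_pair_of_one_lt_card this
  obtain ⟨w⟩ := hconn u v
  cases w with
  | nil => exact absurd rfl huv
  | cons h p =>
    obtain ⟨M, hM, -⟩ := hcov _ ((SimpleGraph.mem_edgeSet H).2 h)
    exact ⟨M, hM⟩

lemma bip_contract {V : Type*} {H : SimpleGraph V} {A B : Set V}
    (hbip : IsBipartitionOf H A B) (X : Set V)
    (hno : ∀ u ∈ X ∩ B, ∀ w ∈ Xᶜ ∩ A, ¬ H.Adj u w) :
    ∃ A₁ B₁ : Set (Option ↥X), IsBipartitionOf (contractOut H X) A₁ B₁ := by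
  refine ⟨{p | ∃ a : ↥X, p = some a ∧ a.1 ∈ A}, {p | ∃ a : ↥X, p = some a ∧ a.1 ∈ A}ᶜ,
    Set.union_compl_self _, disjoint_compl_right, ?_⟩
  have memA : ∀ a : ↥X, (some a ∈ {p | ∃ a : ↥X, p = some a ∧ a.1 ∈ A}) ↔ a.1 ∈ A := by
    intro a
    constructor
    · rintro ⟨a', heq, ha'⟩; cases Option.some_injective _ heq; exact ha'
    · intro h; exact ⟨a, rfl, h⟩
  have memN : (none ∈ {p | ∃ a : ↥X, p = some a ∧ a.1 ∈ A}) ↔ False := by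
    simp only [Set.mem_setOf_eq, iff_false]; rintro ⟨a, heq, -⟩; exact Option.some_ne_none a heq.symm
  intro p q hadj
  obtain ⟨hne, hrel⟩ := hadj
  have key : ∀ a : ↥X, (∃ w : V, w ∉ X ∧ H.Adj a.1 w) → a.1 ∈ A := by
    rintro a ⟨w, hwX, haw⟩
    rcases hbip.2.2 _ _ haw with ⟨ha, -⟩ | ⟨ha, hw⟩
    · exact ha
    · exact absurd haw (hno a.1 ⟨a.2, ha⟩ w ⟨hwX, hw⟩)
  match p, q with
  | some a, some b =>
    have hab : H.Adj a.1 b.1 := by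
      rcases hrel with h | h
      · exact h
      · exact h.symm
    rcases hbip.2.2 _ _ hab with ⟨ha, hb⟩ | ⟨ha, hb⟩
    · left
      refine ⟨(memA a).2 ha, ?_⟩
      intro hmem
      exact Set.disjoint_left.mp hbip.2.1 ((memA b).1 hmem) hb
    · right
      refine ⟨?_, (memA b).2 hb⟩
      intro hmem
      exact Set.disjoint_left.mp hbip.2.1 ((memA a).1 hmem) ha
  | some a, none =>
    rcases hrel with h | h
    · left; exact ⟨(memA a).2 (key a h), fun hmem => (memN).1 hmem⟩
    · exact absurd h id
  | none, some a =>
    rcases hrel with h | h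
    · exact absurd h id
    · right; exact ⟨fun hmem => (memN).1 hmem, (memA a).2 (key a h)⟩
  | none, none => exact absurd rfl hne

lemma no_cross {V : Type*} [Fintype V] {H : SimpleGraph V} {A B : Set V}
    (hbip : IsBipartitionOf H A B) (hmc : MatchingCovered H) {X : Set V}
    (htight : IsTightCut H X)
    (hdiff : (X ∩ A).ncard = (X ∩ B).ncard + 1) :
    ∀ u ∈ X ∩ B, ∀ w ∈ Xᶜ ∩ A, ¬ H.Adj u w := by
  rintro u ⟨huX, huB⟩ w ⟨hwX, hwA⟩ hadj
  obtain ⟨M, hM, heM⟩ := hmc.2.2 s(u, w) ((SimpleGraph.mem_edgeSet H).2 hadj)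
  have hfu : pmFun hM u = w := pmFun_eq_of_adj hM ((SimpleGraph.Subgraph.mem_edgeSet).1 heM)
  have hbal := balance hbip X hM
  have hcut := cut_card X hM
  have hsplit : {v : V | v ∈ X ∧ pmFun hM v ∉ X}.ncard
      = {v : V | v ∈ X ∩ A ∧ pmFun hM v ∉ X}.ncard + {v : V | v ∈ X ∩ B ∧ pmFun hM v ∉ X}.ncard := by
    rw [← Set.ncard_union_eq (by
        rw [Set.disjoint_left]; rintro v ⟨⟨-, h1⟩, -⟩ ⟨⟨-, h2⟩, -⟩
        exact Set.disjoint_left.mp hbip.2.1 h1 h2)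
      (Set.toFinite _) (Set.toFinite _)]
    congr 1
    ext v
    constructor
    · rintro ⟨hvX, hfv⟩
      rcases (by rw [hbip.1]; trivial : v ∈ A ∪ B) with h | h
      · exact Or.inl ⟨⟨hvX, h⟩, hfv⟩
      · exact Or.inr ⟨⟨hvX, h⟩, hfv⟩
    · rintro (⟨⟨h1, -⟩, h2⟩ | ⟨⟨h1, -⟩, h2⟩) <;> exact ⟨h1, h2⟩
  have h1 := htight M hM
  have huSB : u ∈ {v : V | v ∈ X ∩ B ∧ pmFun hM v ∉ X} := ⟨⟨huX, huB⟩, by rw [hfu]; exact hwX⟩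
  have hpos : 0 < {v : V | v ∈ X ∩ B ∧ pmFun hM v ∉ X}.ncard :=
    (Set.ncard_pos (Set.toFinite _)).mpr ⟨u, huSB⟩
  omega

lemma tight_of {V : Type*} [Fintype V] {H : SimpleGraph V} {A B : Set V}
    (hbip : IsBipartitionOf H A B) {X : Set V}
    (hdiff : (X ∩ A).ncard = (X ∩ B).ncard + 1)
    (hno : ∀ u ∈ X ∩ B, ∀ w ∈ Xᶜ ∩ A, ¬ H.Adj u w) :
    IsTightCut H X := by
  intro M hM
  have hbal := balance hbip X hM
  have hcut := cut_card X hM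
  have hSB : {v : V | v ∈ X ∩ B ∧ pmFun hM v ∉ X} = ∅ := by
    ext v
    simp only [Set.mem_setOf_eq, Set.mem_empty_iff_false, iff_false]
    rintro ⟨⟨hvX, hvB⟩, hfv⟩
    have hadj : H.Adj v (pmFun hM v) := M.adj_sub (pmFun_adj hM v)
    have : pmFun hM v ∈ A := mem_B_of_adj (bip_symm hbip) hvB hadj
    exact hno v ⟨hvX, hvB⟩ _ ⟨hfv, this⟩ hadj
  have hsplit : {v : V | v ∈ X ∧ pmFun hM v ∉ X}.ncard
      = {v : V | v ∈ X ∩ A ∧ pmFun hM v ∉ X}.ncard + {v : V | v ∈ X ∩ B ∧ pmFun hM v ∉ X}.ncard := by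
    rw [← Set.ncard_union_eq (by
        rw [Set.disjoint_left]; rintro v ⟨⟨-, h1⟩, -⟩ ⟨⟨-, h2⟩, -⟩
        exact Set.disjoint_left.mp hbip.2.1 h1 h2)
      (Set.toFinite _) (Set.toFinite _)]
    congr 1
    ext v
    constructor
    · rintro ⟨hvX, hfv⟩
      rcases (by rw [hbip.1]; trivial : v ∈ A ∪ B) with h | h
      · exact Or.inl ⟨⟨hvX, h⟩, hfv⟩
      · exact Or.inr ⟨⟨hvX, h⟩, hfv⟩
    · rintro (⟨⟨h1, -⟩, h2⟩ | ⟨⟨h1, -⟩, h2⟩) <;> exact ⟨h1, h2⟩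
  rw [hSB, Set.ncard_empty] at hbal hsplit
  omega

lemma split_card {V : Type*} [Fintype V] {H : SimpleGraph V} {A B : Set V}
    (hbip : IsBipartitionOf H A B) (X : Set V) {M : H.Subgraph} (hM : M.IsPerfectMatching) :
    {v : V | v ∈ X ∧ pmFun hM v ∉ X}.ncard
      = {v : V | v ∈ X ∩ A ∧ pmFun hM v ∉ X}.ncard + {v : V | v ∈ X ∩ B ∧ pmFun hM v ∉ X}.ncard := by
  rw [← Set.ncard_union_eq (by
      rw [Set.disjoint_left]; rintro v ⟨⟨-, h1⟩, -⟩ ⟨⟨-, h2⟩, -⟩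
      exact Set.disjoint_left.mp hbip.2.1 h1 h2)
    (Set.toFinite _) (Set.toFinite _)]
  congr 1
  ext v
  constructor
  · rintro ⟨hvX, hfv⟩
    rcases (by rw [hbip.1]; trivial : v ∈ A ∪ B) with h | h
    · exact Or.inl ⟨⟨hvX, h⟩, hfv⟩
    · exact Or.inr ⟨⟨hvX, h⟩, hfv⟩
  · rintro (⟨⟨h1, -⟩, h2⟩ | ⟨⟨h1, -⟩, h2⟩) <;> exact ⟨h1, h2⟩

/-- an odd cut `∂(X)` of a bipartite matching covered graph
`H[A,B]` is tight iff `|X⁺| = |X⁻| + 1` and there is no edge joining `X⁻` and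
`X̄⁻`; consequently, if `∂(X)` is tight then both contractions are bipartite. -/
theorem tight_cut_characterization_bipartite {V : Type*} [Fintype V]
    (H : SimpleGraph V) (A B : Set V) (hbip : IsBipartitionOf H A B)
    (hmc : MatchingCovered H) (X : Set V) (hodd : Odd X.ncard) :
    (IsTightCut H X ↔
      ((shorePlus A B X).ncard = (shoreMinus A B X).ncard + 1 ∧
        ∀ u ∈ shoreMinus A B X, ∀ w ∈ shoreMinus A B Xᶜ, ¬ H.Adj u w)) ∧
    (IsTightCut H X →
      (∃ A₁ B₁ : Set (Option ↥X), IsBipartitionOf (contractOut H X) A₁ B₁) ∧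
      (∃ A₂ B₂ : Set (Option ↥Xᶜ), IsBipartitionOf (contractOut H Xᶜ) A₂ B₂)) := by
  obtain ⟨M0, hM0⟩ := exists_pm hmc
  have hAB : A.ncard = B.ncard := cardAB hbip hM0
  have hpA := part_card X A
  have hpB := part_card X B
  have hiff : IsTightCut H X ↔
      ((shorePlus A B X).ncard = (shoreMinus A B X).ncard + 1 ∧
        ∀ u ∈ shoreMinus A B X, ∀ w ∈ shoreMinus A B Xᶜ, ¬ H.Adj u w) := by
    constructor
    · intro ht
      have hbal := balance hbip X hM0
      have hcut := cut_card X hM0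
      have hsp := split_card hbip X hM0
      have h1 := ht M0 hM0
      by_cases hSB : {v : V | v ∈ X ∩ B ∧ pmFun hM0 v ∉ X}.ncard = 0
      · have hm : (X ∩ A).ncard = (X ∩ B).ncard + 1 := by omega
        have hge : (X ∩ B).ncard ≤ (X ∩ A).ncard := by omega
        have hplus : shorePlus A B X = X ∩ A := if_pos hge
        have hminus : shoreMinus A B X = X ∩ B := if_pos hge
        have hcge : ¬ ((Xᶜ ∩ B).ncard ≤ (Xᶜ ∩ A).ncard) := by omega
        have hminusC : shoreMinus A B Xᶜ = Xᶜ ∩ A := if_neg hcge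
        refine ⟨by rw [hplus, hminus]; exact hm, ?_⟩
        rw [hminus, hminusC]
        exact no_cross hbip hmc ht hm
      · have hm : (X ∩ B).ncard = (X ∩ A).ncard + 1 := by omega
        have hge : ¬ ((X ∩ B).ncard ≤ (X ∩ A).ncard) := by omega
        have hplus : shorePlus A B X = X ∩ B := if_neg hge
        have hminus : shoreMinus A B X = X ∩ A := if_neg hge
        have hcge : (Xᶜ ∩ B).ncard ≤ (Xᶜ ∩ A).ncard := by omega
        have hminusC : shoreMinus A B Xᶜ = Xᶜ ∩ B := if_pos hcge
        refine ⟨by rw [hplus, hminus]; exact hm, ?_⟩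
        rw [hminus, hminusC]
        have := no_cross (bip_symm hbip) hmc ht hm
        intro u hu w hw hadj
        exact this u ⟨hu.1, hu.2⟩ w ⟨hw.1, hw.2⟩ hadj
    · rintro ⟨h1, h2⟩
      by_cases hge : (X ∩ B).ncard ≤ (X ∩ A).ncard
      · have hplus : shorePlus A B X = X ∩ A := if_pos hge
        have hminus : shoreMinus A B X = X ∩ B := if_pos hge
        rw [hplus, hminus] at h1
        have hcge : ¬ ((Xᶜ ∩ B).ncard ≤ (Xᶜ ∩ A).ncard) := by omega
        have hminusC : shoreMinus A B Xᶜ = Xᶜ ∩ A := if_neg hcge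
        rw [hminus, hminusC] at h2
        exact tight_of hbip h1 h2
      · have hplus : shorePlus A B X = X ∩ B := if_neg hge
        have hminus : shoreMinus A B X = X ∩ A := if_neg hge
        rw [hplus, hminus] at h1
        have hcge : (Xᶜ ∩ B).ncard ≤ (Xᶜ ∩ A).ncard := by omega
        have hminusC : shoreMinus A B Xᶜ = Xᶜ ∩ B := if_pos hcge
        rw [hminus, hminusC] at h2
        exact tight_of (bip_symm hbip) h1 h2
  refine ⟨hiff, ?_⟩
  intro ht
  obtain ⟨h1, h2⟩ := hiff.1 ht
  by_cases hge : (X ∩ B).ncard ≤ (X ∩ A).ncard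
  · have hplus : shorePlus A B X = X ∩ A := if_pos hge
    have hminus : shoreMinus A B X = X ∩ B := if_pos hge
    rw [hplus, hminus] at h1
    have hcge : ¬ ((Xᶜ ∩ B).ncard ≤ (Xᶜ ∩ A).ncard) := by omega
    have hminusC : shoreMinus A B Xᶜ = Xᶜ ∩ A := if_neg hcge
    rw [hminus, hminusC] at h2
    constructor
    · exact bip_contract hbip X h2
    · apply bip_contract (bip_symm hbip) Xᶜ
      intro u hu w hw hadj
      rw [compl_compl] at hw
      exact h2 w ⟨hw.1, hw.2⟩ u ⟨hu.1, hu.2⟩ hadj.symm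
  · have hplus : shorePlus A B X = X ∩ B := if_neg hge
    have hminus : shoreMinus A B X = X ∩ A := if_neg hge
    rw [hplus, hminus] at h1
    have hcge : (Xᶜ ∩ B).ncard ≤ (Xᶜ ∩ A).ncard := by omega
    have hminusC : shoreMinus A B Xᶜ = Xᶜ ∩ B := if_pos hcge
    rw [hminus, hminusC] at h2
    constructor
    · exact bip_contract (bip_symm hbip) X h2
    · apply bip_contract hbip Xᶜ
      intro u hu w hw hadj
      rw [compl_compl] at hw
      exact h2 w ⟨hw.1, hw.2⟩ u ⟨hu.1, hu.2⟩ hadj.symm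
end

section
/- Let ∂(X) be a tight cut of a connected bipartite cubic graph H[A,B] with X⁺ ⊆ B. Then for every a ∈ X⁻ and b ∈ X̄⁻, the pair (a,b) is not λ-matchable in H; that is, H has no spanning subgraph in which a and b have degree 3 and every other vertex has degree 1. -/
open SimpleGraph Set

section AuxTightCut
open Finset
open scoped Classical

variable {V : Type*} [Fintype V] {H : SimpleGraph V}

/-- neighbor finset via classical -/
noncomputable def nbrF (H : SimpleGraph V) (v : V) : Finset V :=
  (Set.toFinite (H.neighborSet v)).toFinset

lemma mem_nbrF {v w : V} : w ∈ nbrF H v ↔ H.Adj v w := by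
  simp [nbrF, Set.Finite.mem_toFinset, SimpleGraph.mem_neighborSet]

lemma nbrF_card (hcub : IsCubic H) (v : V) : (nbrF H v).card = 3 := by
  have := hcub v
  rwa [Set.ncard_eq_toFinset_card' , Set.toFinset_card, ← Set.Finite.card_toFinset (Set.toFinite _)] at this

lemma double_count (hcub : IsCubic H) (s U : Finset V)
    (hsub : ∀ i ∈ s, ∀ w, H.Adj i w → w ∈ U) :
    ∑ w ∈ U, (s.filter fun i => H.Adj i w).card = 3 * s.card := by
  have h1 : ∀ i ∈ s, (U.filter fun w => H.Adj i w).card = 3 := by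
    intro i hi
    have : U.filter (fun w => H.Adj i w) = nbrF H i := by
      ext w; simp only [Finset.mem_filter, mem_nbrF]
      exact ⟨fun h => h.2, fun h => ⟨hsub i hi w h, h⟩⟩
    rw [this, nbrF_card hcub]
  calc ∑ w ∈ U, (s.filter fun i => H.Adj i w).card
      = ∑ w ∈ U, ∑ i ∈ s, if H.Adj i w then 1 else 0 :=
        Finset.sum_congr rfl (fun w _ => Finset.card_filter _ _)
    _ = ∑ i ∈ s, ∑ w ∈ U, if H.Adj i w then 1 else 0 := Finset.sum_comm
    _ = ∑ i ∈ s, (U.filter fun w => H.Adj i w).card :=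
        Finset.sum_congr rfl (fun i _ => (Finset.card_filter _ _).symm)
    _ = ∑ i ∈ s, 3 := Finset.sum_congr rfl h1
    _ = 3 * s.card := by rw [Finset.sum_const]; ring

variable {A B : Set V}

lemma side_of_adj (hbip : IsBipartitionOf H A B) {u v : V} (h : H.Adj u v) (hu : u ∈ A) :
    v ∈ B := by
  rcases hbip.2.2 u v h with ⟨_, hv⟩ | ⟨huB, _⟩
  · exact hv
  · exact absurd huB (Set.disjoint_left.mp hbip.2.1 hu)

lemma side_of_adj' (hbip : IsBipartitionOf H A B) {u v : V} (h : H.Adj u v) (hu : u ∈ B) :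
    v ∈ A := by
  rcases hbip.2.2 u v h with ⟨huA, _⟩ | ⟨_, hv⟩
  · exact absurd hu (Set.disjoint_left.mp hbip.2.1 huA)
  · exact hv

lemma sides_ncard_eq (hbip : IsBipartitionOf H A B) (hcub : IsCubic H) :
    A.ncard = B.ncard := by
  have hA : ∀ i ∈ (Set.toFinite A).toFinset, ∀ w, H.Adj i w → w ∈ (Set.toFinite B).toFinset := by
    intro i hi w hw
    rw [Set.Finite.mem_toFinset] at hi ⊢
    exact side_of_adj hbip hw hi
  have hdc := double_count hcub (Set.toFinite A).toFinset (Set.toFinite B).toFinset hA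
  have hterm : ∀ w ∈ (Set.toFinite B).toFinset,
      ((Set.toFinite A).toFinset.filter fun i => H.Adj i w).card = 3 := by
    intro w hw
    rw [Set.Finite.mem_toFinset] at hw
    have : (Set.toFinite A).toFinset.filter (fun i => H.Adj i w) = nbrF H w := by
      ext i
      simp only [Finset.mem_filter, Set.Finite.mem_toFinset, mem_nbrF]
      constructor
      · rintro ⟨_, h⟩; exact h.symm
      · intro h; exact ⟨side_of_adj' hbip h hw, h.symm⟩
    rw [this, nbrF_card hcub]
  rw [Finset.sum_congr rfl hterm, Finset.sum_const, smul_eq_mul, mul_comm] at hdc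
  have := Nat.eq_of_mul_eq_mul_left (by norm_num : 0 < 3) hdc
  rw [Set.ncard_eq_toFinset_card _ (Set.toFinite A), Set.ncard_eq_toFinset_card _ (Set.toFinite B)]
  omega

lemma hall_cond (hbip : IsBipartitionOf H A B) (hcub : IsCubic H)
    {u₀ v₀ : V} (hadj : H.Adj u₀ v₀) (hu : u₀ ∈ A)
    (s : Finset V) (hs : ↑s ⊆ A \ {u₀}) :
    s.card ≤ (s.biUnion fun i => nbrF H i \ {v₀}).card := by
  set U := s.biUnion (nbrF H) with hU
  have hsub : ∀ i ∈ s, ∀ w, H.Adj i w → w ∈ U := fun i hi w hw =>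
    Finset.mem_biUnion.mpr ⟨i, hi, mem_nbrF.mpr hw⟩
  have hdc := double_count hcub s U hsub
  have hbU : s.biUnion (fun i => nbrF H i \ {v₀}) = U \ {v₀} := by
    ext w
    simp only [Finset.mem_biUnion, Finset.mem_sdiff, Finset.mem_singleton, hU]
    tauto
  have col_le : ∀ w ∈ U, (s.filter fun i => H.Adj i w).card ≤ 3 := by
    intro w _
    have : s.filter (fun i => H.Adj i w) ⊆ nbrF H w := by
      intro i hi
      rw [Finset.mem_filter] at hi
      exact mem_nbrF.mpr hi.2.symm
    exact le_trans (Finset.card_le_card this) (le_of_eq (nbrF_card hcub w))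
  rw [hbU]
  by_cases hv0 : v₀ ∈ U
  · have colv : (s.filter fun i => H.Adj i v₀).card ≤ 2 := by
      have hsub2 : s.filter (fun i => H.Adj i v₀) ⊆ nbrF H v₀ \ {u₀} := by
        intro i hi
        rw [Finset.mem_filter] at hi
        rw [Finset.mem_sdiff, Finset.mem_singleton]
        refine ⟨mem_nbrF.mpr hi.2.symm, ?_⟩
        intro h
        have := hs hi.1
        rw [Set.mem_diff, Set.mem_singleton_iff] at this
        exact this.2 h
      have hcard : (nbrF H v₀ \ {u₀}).card = 2 := by
        rw [Finset.card_sdiff_of_subset (Finset.singleton_subset_iff.mpr (mem_nbrF.mpr hadj.symm)),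
          nbrF_card hcub, Finset.card_singleton]
      exact le_trans (Finset.card_le_card hsub2) (le_of_eq hcard)
    have hsplit : ∑ w ∈ U, (s.filter fun i => H.Adj i w).card
        = (s.filter fun i => H.Adj i v₀).card
          + ∑ w ∈ U.erase v₀, (s.filter fun i => H.Adj i w).card :=
      (Finset.add_sum_erase U _ hv0).symm
    have hrest : ∑ w ∈ U.erase v₀, (s.filter fun i => H.Adj i w).card
        ≤ (U.erase v₀).card * 3 := by
      have := Finset.sum_le_card_nsmul (U.erase v₀) (fun w => (s.filter fun i => H.Adj i w).card)
        3 (fun w hw => col_le w (Finset.mem_of_mem_erase hw))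
      simpa [smul_eq_mul] using this
    have : 3 * s.card ≤ 2 + (U.erase v₀).card * 3 := by omega
    have hcard : (U \ {v₀}).card = (U.erase v₀).card := by rw [Finset.erase_eq]
    omega
  · have : U \ {v₀} = U := by
      rw [Finset.sdiff_eq_self_iff_disjoint, Finset.disjoint_singleton_right]
      exact hv0
    rw [this]
    have := Finset.sum_le_card_nsmul U (fun w => (s.filter fun i => H.Adj i w).card)
      3 col_le
    simp only [smul_eq_mul] at this
    omega

set_option maxHeartbeats 800000 in
lemma exists_pm_through (hbip : IsBipartitionOf H A B) (hcub : IsCubic H)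
    {u₀ v₀ : V} (hadj : H.Adj u₀ v₀) (hu : u₀ ∈ A) (hv : v₀ ∈ B) :
    ∃ N : H.Subgraph, N.IsPerfectMatching ∧ N.Adj u₀ v₀ := by
  classical
  have hdisj := hbip.2.1
  -- Hall's theorem on A \ {u₀}
  set ι := ↥(A \ {u₀} : Set V)
  have hall : ∀ s : Finset ι, s.card ≤ (s.biUnion fun i => nbrF H i.1 \ {v₀}).card := by
    intro s
    have himg : (s.image (Subtype.val : ι → V)).card = s.card :=
      Finset.card_image_of_injective s Subtype.val_injective
    have hbiu : (s.image Subtype.val).biUnion (fun i => nbrF H i \ {v₀})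
        = s.biUnion fun i => nbrF H i.1 \ {v₀} := by
      ext w
      simp only [Finset.mem_biUnion, Finset.mem_image]
      constructor
      · rintro ⟨x, ⟨i, hi, rfl⟩, hw⟩; exact ⟨i, hi, hw⟩
      · rintro ⟨i, hi, hw⟩; exact ⟨i.1, ⟨i, hi, rfl⟩, hw⟩
    have hss : ↑(s.image (Subtype.val : ι → V)) ⊆ A \ {u₀} := by
      intro x hx
      simp only [Finset.coe_image, Set.mem_image] at hx
      obtain ⟨i, _, rfl⟩ := hx
      exact i.2
    have := hall_cond hbip hcub hadj hu (s.image Subtype.val) hss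
    rw [himg, hbiu] at this
    exact this
  obtain ⟨f, hfinj, hf⟩ := (Finset.all_card_le_biUnion_card_iff_exists_injective
    (fun i : ι => nbrF H i.1 \ {v₀})).mp hall
  have hfadj : ∀ i : ι, H.Adj i.1 (f i) := by
    intro i
    have := hf i
    rw [Finset.mem_sdiff] at this
    exact mem_nbrF.mp this.1
  have hfB : ∀ i : ι, f i ∈ B \ {v₀} := by
    intro i
    have h1 : f i ∈ B := side_of_adj hbip (hfadj i) i.2.1
    have := hf i
    rw [Finset.mem_sdiff, Finset.mem_singleton] at this
    exact ⟨h1, this.2⟩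
  -- surjectivity of f onto B \ {v₀}
  have hcards : (A \ {u₀} : Set V).ncard = (B \ {v₀} : Set V).ncard := by
    rw [Set.ncard_diff_singleton_of_mem hu, Set.ncard_diff_singleton_of_mem hv,
      sides_ncard_eq hbip hcub]
  have hsurj : ∀ w ∈ B \ {v₀}, ∃ i : ι, f i = w := by
    by_contra hcon
    push_neg at hcon
    obtain ⟨w, hw, hwne⟩ := hcon
    -- image of f is a subset of (B \ {v₀}) missing w, but cards are equal
    have hsub : (Set.range fun i : ι => f i) ⊆ (B \ {v₀}) \ {w} := by
      rintro x ⟨i, rfl⟩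
      exact ⟨hfB i, fun h => hwne i (by simpa using h)⟩
    have h1 : (A \ {u₀} : Set V).ncard = (Set.range fun i : ι => f i).ncard := by
      rw [← Set.image_univ, Set.ncard_image_of_injective _ hfinj, Set.ncard_univ,
        Nat.card_eq_fintype_card, ← Nat.card_eq_fintype_card, Nat.card_coe_set_eq]
    have h2 : (Set.range fun i : ι => f i).ncard ≤ ((B \ {v₀}) \ {w} : Set V).ncard :=
      Set.ncard_le_ncard hsub (Set.toFinite _)
    have h3 : ((B \ {v₀}) \ {w} : Set V).ncard = (B \ {v₀} : Set V).ncard - 1 :=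
      Set.ncard_diff_singleton_of_mem hw
    have h4 : 0 < (B \ {v₀} : Set V).ncard :=
      (Set.ncard_pos (Set.toFinite _)).mpr ⟨w, hw⟩
    omega
  -- build the perfect matching subgraph
  have huv : u₀ ≠ v₀ := fun h => Set.disjoint_left.mp hdisj hu (h ▸ hv)
  have hANB : ∀ x, x ∈ A → x ∉ B := fun x hx => Set.disjoint_left.mp hdisj hx
  refine ⟨⟨Set.univ,
    fun x y => (x = u₀ ∧ y = v₀) ∨ (x = v₀ ∧ y = u₀) ∨
      (∃ i : ι, x = i.1 ∧ y = f i) ∨ (∃ i : ι, y = i.1 ∧ x = f i),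
    ?_, fun _ => Set.mem_univ _, ?_⟩, ?_, ?_⟩
  · rintro x y (⟨rfl, rfl⟩ | ⟨rfl, rfl⟩ | ⟨i, rfl, rfl⟩ | ⟨i, rfl, rfl⟩)
    · exact hadj
    · exact hadj.symm
    · exact hfadj i
    · exact (hfadj i).symm
  · constructor; rintro x y (⟨rfl, rfl⟩ | ⟨rfl, rfl⟩ | ⟨i, rfl, rfl⟩ | ⟨i, rfl, rfl⟩)
    · exact Or.inr (Or.inl ⟨rfl, rfl⟩)
    · exact Or.inl ⟨rfl, rfl⟩
    · exact Or.inr (Or.inr (Or.inr ⟨i, rfl, rfl⟩))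
    · exact Or.inr (Or.inr (Or.inl ⟨i, rfl, rfl⟩))
  · rw [SimpleGraph.Subgraph.isPerfectMatching_iff]
    intro v
    by_cases hvA : v ∈ A
    · by_cases hv0 : v = u₀
      · subst hv0
        refine ⟨v₀, Or.inl ⟨rfl, rfl⟩, ?_⟩
        rintro y (⟨-, rfl⟩ | ⟨h, -⟩ | ⟨i, hi, -⟩ | ⟨i, -, hi⟩)
        · rfl
        · exact absurd h huv
        · exact absurd hi.symm i.2.2
        · exact absurd (hfB i).1 (hi ▸ hANB _ hu)
      · set i : ι := ⟨v, hvA, hv0⟩ with hidef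
        refine ⟨f i, Or.inr (Or.inr (Or.inl ⟨i, rfl, rfl⟩)), ?_⟩
        rintro y (⟨h, -⟩ | ⟨h, -⟩ | ⟨j, hj, rfl⟩ | ⟨j, -, hj⟩)
        · exact absurd h hv0
        · exact absurd hv (hANB _ (h ▸ hvA))
        · congr 1
          exact Subtype.ext hj.symm
        · exact absurd ((hj ▸ hvA) : f j ∈ A) (fun hh => hANB _ hh (hfB j).1)
    · have hvB : v ∈ B := by
        have := hbip.1
        have hx : v ∈ A ∪ B := this ▸ Set.mem_univ v
        rcases hx with h | h
        · exact absurd h hvA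
        · exact h
      by_cases hv0 : v = v₀
      · subst hv0
        refine ⟨u₀, Or.inr (Or.inl ⟨rfl, rfl⟩), ?_⟩
        rintro y (⟨h, -⟩ | ⟨-, rfl⟩ | ⟨i, hi, -⟩ | ⟨i, -, hi⟩)
        · exact absurd h.symm huv
        · rfl
        · exact absurd (hi ▸ hvB) (hANB _ i.2.1)
        · exact absurd hi.symm (hfB i).2
      · obtain ⟨i, hi⟩ := hsurj v ⟨hvB, hv0⟩
        refine ⟨i.1, Or.inr (Or.inr (Or.inr ⟨i, rfl, hi.symm⟩)), ?_⟩
        rintro y (⟨h, -⟩ | ⟨h, -⟩ | ⟨j, hj, -⟩ | ⟨j, hj, hj2⟩)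
        · exact absurd (h ▸ hvB) (hANB _ hu)
        · exact absurd h hv0
        · exact absurd (hj ▸ hvB) (hANB _ j.2.1)
        · have : j = i := hfinj (by rw [← hj2, hi])
          rw [hj, this]
  · exact Or.inl ⟨rfl, rfl⟩


lemma pm_key (hbip : IsBipartitionOf H A B) {X : Set V} (htight : IsTightCut H X)
    (hplus : (X ∩ A).ncard < (X ∩ B).ncard)
    (N : H.Subgraph) (hN : N.IsPerfectMatching) :
    (∀ u w, N.Adj u w → u ∈ X → u ∈ A → w ∈ X) ∧
      (X ∩ B).ncard = (X ∩ A).ncard + 1 := by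
  classical
  have huniq := SimpleGraph.Subgraph.isPerfectMatching_iff.mp hN
  have hex : ∀ v : V, ∃ w, N.Adj v w ∧ ∀ w', N.Adj v w' → w' = w := by
    intro v
    obtain ⟨w, hw, hwu⟩ := huniq v
    exact ⟨w, hw, hwu⟩
  choose f hfadj hfu using hex
  have hfinv : ∀ v, f (f v) = v := fun v => (hfu (f v) v ((hfadj v).symm)).symm
  have hfinj : Function.Injective f := by
    intro x y h
    rw [← hfinv x, h, hfinv]
  -- the set of X-endpoints of cut edges
  set S : Set V := {v | v ∈ X ∧ f v ∉ X} with hS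
  have himg : (fun v => s(v, f v)) '' S = N.edgeSet ∩ cutEdges H X := by
    ext e
    constructor
    · rintro ⟨v, ⟨hvX, hvfX⟩, rfl⟩
      refine ⟨SimpleGraph.Subgraph.mem_edgeSet.mpr (hfadj v), ?_, v, f v, rfl, hvX, hvfX⟩
      exact (SimpleGraph.mem_edgeSet H).mpr (hfadj v).adj_sub
    · rintro ⟨heN, -, u, w, rfl, huX, hwX⟩
      have hadj : N.Adj u w := SimpleGraph.Subgraph.mem_edgeSet.mp heN
      have : w = f u := hfu u w hadj
      subst this
      exact ⟨u, ⟨huX, hwX⟩, rfl⟩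
  have hSinj : Set.InjOn (fun v => s(v, f v)) S := by
    intro x hx y hy hxy
    simp only [Sym2.eq_iff] at hxy
    rcases hxy with ⟨h1, -⟩ | ⟨h1, h2⟩
    · exact h1
    · have hfyX : f y ∈ X := by rw [← h1]; exact hx.1
      exact (hy.2 hfyX).elim
  have hS1 : S.ncard = 1 := by
    rw [← htight N hN, ← himg, Set.ncard_image_of_injOn hSinj]
  -- split S by sides
  set SA : Set V := {v | v ∈ X ∩ A ∧ f v ∉ X} with hSA
  set SB : Set V := {v | v ∈ X ∩ B ∧ f v ∉ X} with hSB
  have hSsplit : S = SA ∪ SB := by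
    ext v
    simp only [hS, hSA, hSB, Set.mem_setOf_eq, Set.mem_union, Set.mem_inter_iff]
    constructor
    · rintro ⟨hvX, hvf⟩
      have : v ∈ A ∪ B := hbip.1 ▸ Set.mem_univ v
      rcases this with h | h
      · exact Or.inl ⟨⟨hvX, h⟩, hvf⟩
      · exact Or.inr ⟨⟨hvX, h⟩, hvf⟩
    · rintro (⟨⟨h1, _⟩, h2⟩ | ⟨⟨h1, _⟩, h2⟩) <;> exact ⟨h1, h2⟩
  have hSdisj : Disjoint SA SB := by
    rw [Set.disjoint_left]
    rintro v ⟨⟨-, hvA⟩, -⟩ ⟨⟨-, hvB⟩, -⟩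
    exact Set.disjoint_left.mp hbip.2.1 hvA hvB
  have hsum : SA.ncard + SB.ncard = 1 := by
    rw [← Set.ncard_union_eq hSdisj (Set.toFinite _) (Set.toFinite _), ← hSsplit, hS1]
  -- pairing the non-crossing vertices
  set CA : Set V := {v | v ∈ X ∩ A ∧ f v ∈ X} with hCA
  set CB : Set V := {v | v ∈ X ∩ B ∧ f v ∈ X} with hCB
  have hCimg : f '' CA = CB := by
    ext w
    constructor
    · rintro ⟨v, ⟨⟨hvX, hvA⟩, hvf⟩, rfl⟩
      have hwB : f v ∈ B := side_of_adj hbip (hfadj v).adj_sub hvA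
      exact ⟨⟨hvf, hwB⟩, by rw [hfinv]; exact hvX⟩
    · rintro ⟨⟨hwX, hwB⟩, hwf⟩
      refine ⟨f w, ⟨⟨hwf, side_of_adj' hbip (hfadj w).adj_sub hwB⟩, ?_⟩, hfinv w⟩
      rw [hfinv]; exact hwX
  have hCcard : CA.ncard = CB.ncard := by
    rw [← hCimg, Set.ncard_image_of_injOn (hfinj.injOn)]
  have hXA : (X ∩ A).ncard = CA.ncard + SA.ncard := by
    rw [← Set.ncard_union_eq ?_ (Set.toFinite _) (Set.toFinite _)]
    · congr 1
      ext v
      simp only [hCA, hSA, Set.mem_union, Set.mem_setOf_eq]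
      by_cases h : f v ∈ X <;> tauto
    · rw [Set.disjoint_left]
      rintro v ⟨-, h1⟩ ⟨-, h2⟩
      exact h2 h1
  have hXB : (X ∩ B).ncard = CB.ncard + SB.ncard := by
    rw [← Set.ncard_union_eq ?_ (Set.toFinite _) (Set.toFinite _)]
    · congr 1
      ext v
      simp only [hCB, hSB, Set.mem_union, Set.mem_setOf_eq]
      by_cases h : f v ∈ X <;> tauto
    · rw [Set.disjoint_left]
      rintro v ⟨-, h1⟩ ⟨-, h2⟩
      exact h2 h1
  have hSA0 : SA.ncard = 0 := by omega
  have hSAempty : SA = ∅ := (Set.ncard_eq_zero (Set.toFinite _)).mp hSA0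
  constructor
  · intro u w hadj huX huA
    by_contra hwX
    have : u ∈ SA := ⟨⟨huX, huA⟩, (hfu u w hadj) ▸ hwX⟩
    rw [hSAempty] at this
    exact this
  · omega



end AuxTightCut

/-- for a tight cut `∂(X)` of a connected bipartite cubic graph
`H[A,B]` with `X⁺ ⊆ B` (i.e. the `B`-side of `X` is the larger one, so that
`X⁻ = X ∩ A` and `X̄⁻ = X̄ ∩ B`), no pair `(a, b)` with `a ∈ X⁻`, `b ∈ X̄⁻` is
λ-matchable in `H`. -/
theorem tight_cut_pair_not_lambdaMatchable {V : Type*} [Fintype V]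
    (H : SimpleGraph V) (A B : Set V) (hbip : IsBipartitionOf H A B)
    (hconn : H.Connected) (hcub : IsCubic H)
    (X : Set V) (htight : IsTightCut H X)
    (hplus : (X ∩ A).ncard < (X ∩ B).ncard) :
    ∀ a ∈ X ∩ A, ∀ b ∈ Xᶜ ∩ B, ¬ IsLambdaMatchablePair H a b := by
  classical
  rintro a ⟨haX, haA⟩ b ⟨hbX, hbB⟩ ⟨M, hMsp, hMa, hMb, hMdeg⟩
  rw [Set.mem_compl_iff] at hbX
  -- partner function for ordinary vertices of M
  have hp' : ∀ u : V, u ≠ a → u ≠ b → ∃ w, M.neighborSet u = {w} := fun u h1 h2 =>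
    Set.ncard_eq_one.mp (hMdeg u h1 h2)
  choose! p hp using hp'
  have hpadj : ∀ u, u ≠ a → u ≠ b → M.Adj u (p u) := by
    intro u h1 h2
    have hmem : p u ∈ ({p u} : Set V) := rfl
    rw [← hp u h1 h2] at hmem
    exact (SimpleGraph.Subgraph.mem_neighborSet M u (p u)).mp hmem
  have hpu : ∀ u, u ≠ a → u ≠ b → ∀ w, M.Adj u w → w = p u := by
    intro u h1 h2 w hw
    have : w ∈ M.neighborSet u := (SimpleGraph.Subgraph.mem_neighborSet M u w).mpr hw
    rw [hp u h1 h2] at this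
    exact this
  -- existence of a perfect matching, giving |X ∩ B| = |X ∩ A| + 1
  have ha3 := hcub a
  have hane : (H.neighborSet a).Nonempty := by
    apply Set.nonempty_of_ncard_ne_zero
    omega
  obtain ⟨w₀, hw₀⟩ := hane
  have hw₀B : w₀ ∈ B := side_of_adj hbip hw₀ haA
  obtain ⟨N₀, hN₀, -⟩ := exists_pm_through hbip hcub hw₀ haA hw₀B
  have hd := (pm_key hbip htight hplus N₀ hN₀).2
  -- M must have an edge from X ∩ A leaving X
  have hcross : ∃ u v, M.Adj u v ∧ (u ∈ X ∧ u ∈ A) ∧ v ∉ X := by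
    by_contra hno
    push_neg at hno
    set P : Set (V × V) := {q | q.1 ∈ X ∩ A ∧ q.2 ∈ X ∩ B ∧ M.Adj q.1 q.2} with hP
    have hub : P.ncard ≤ (X ∩ B).ncard := by
      have hinj : Set.InjOn Prod.snd P := by
        rintro ⟨u1, v1⟩ ⟨hu1, hv1, hadj1⟩ ⟨u2, v2⟩ ⟨hu2, hv2, hadj2⟩ h
        simp only at h
        subst h
        have hv1a : v1 ≠ a := fun h => Set.disjoint_left.mp hbip.2.1 haA (h ▸ hv1.2)
        have hv1b : v1 ≠ b := fun h => hbX (h ▸ hv1.1)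
        have e1 : u1 = p v1 := hpu v1 hv1a hv1b u1 hadj1.symm
        have e2 : u2 = p v1 := hpu v1 hv1a hv1b u2 hadj2.symm
        simp only [Prod.mk.injEq]
        exact ⟨e1.trans e2.symm, trivial⟩
      calc P.ncard = (Prod.snd '' P).ncard := (Set.ncard_image_of_injOn hinj).symm
        _ ≤ (X ∩ B).ncard := Set.ncard_le_ncard
            (by rintro x ⟨⟨q1, q2⟩, ⟨-, hq, -⟩, rfl⟩; exact hq) (Set.toFinite _)
    set P1 : Set (V × V) := (fun w => (a, w)) '' (M.neighborSet a) with hP1d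
    set P2 : Set (V × V) := (fun u => (u, p u)) '' ((X ∩ A) \ {a}) with hP2d
    have hP1 : P1 ⊆ P := by
      rintro q ⟨w, hw, rfl⟩
      have hadj : M.Adj a w := (SimpleGraph.Subgraph.mem_neighborSet M a w).mp hw
      have hwB : w ∈ B := side_of_adj hbip hadj.adj_sub haA
      exact ⟨⟨haX, haA⟩, ⟨hno a w hadj ⟨haX, haA⟩, hwB⟩, hadj⟩
    have hP2 : P2 ⊆ P := by
      rintro q ⟨u, hu, rfl⟩
      obtain ⟨⟨huX, huA⟩, hua⟩ := hu
      rw [Set.mem_singleton_iff] at hua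
      have hub' : u ≠ b := fun h => Set.disjoint_left.mp hbip.2.1 huA (h ▸ hbB)
      have hadj : M.Adj u (p u) := hpadj u hua hub'
      have hpB : p u ∈ B := side_of_adj hbip hadj.adj_sub huA
      exact ⟨⟨huX, huA⟩, ⟨hno u (p u) hadj ⟨huX, huA⟩, hpB⟩, hadj⟩
    have hd1 : P1.ncard = 3 := by
      rw [hP1d, Set.ncard_image_of_injective _ (fun w w' h => by
        simpa using h : Function.Injective fun w => ((a, w) : V × V))]
      exact hMa
    have hd2 : P2.ncard = (X ∩ A).ncard - 1 := by
      rw [hP2d, Set.ncard_image_of_injOn (fun u _ u' _ h => (Prod.ext_iff.mp h).1),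
        Set.ncard_diff_singleton_of_mem (show a ∈ X ∩ A from ⟨haX, haA⟩)]
    have hdisj12 : Disjoint P1 P2 := by
      rw [Set.disjoint_left]
      rintro q ⟨w, -, rfl⟩ ⟨u, hu, hq⟩
      have huea : u = a := by simpa using congrArg Prod.fst hq
      exact hu.2 huea
    have hsub : P1 ∪ P2 ⊆ P := Set.union_subset hP1 hP2
    have hle : P1.ncard + P2.ncard ≤ P.ncard := by
      rw [← Set.ncard_union_eq hdisj12 (Set.toFinite _) (Set.toFinite _)]
      exact Set.ncard_le_ncard hsub (Set.toFinite _)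
    have hXA1 : 1 ≤ (X ∩ A).ncard := by
      have : (X ∩ A).Nonempty := ⟨a, haX, haA⟩
      have := (Set.ncard_pos (Set.toFinite _)).mpr this
      omega
    omega
  obtain ⟨u, v, huv, huXA, hvX⟩ := hcross
  have hHuv : H.Adj u v := huv.adj_sub
  have hvB : v ∈ B := side_of_adj hbip hHuv huXA.2
  obtain ⟨N, hN, hNadj⟩ := exists_pm_through hbip hcub hHuv huXA.2 hvB
  exact hvX ((pm_key hbip htight hplus N hN).1 u v hNadj huXA.1 huXA.2)
end
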